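/- arXiv:1103.0598 — 6 statements merged into one kernel-verified Lean document; each statement's English description precedes it below -/
import Mathlib

section
/- Any finite sum of independent (not necessarily identically distributed) Bernoulli random variables has a unimodal distribution on {0,1,...,n}: there exists a mode M such that the probability mass function is nonincreasing on {0,...,M} when read from M downward and nonincreasing on {M,...,n} when read from M upward (equivalently, nondecreasing up to M and nonincreasing after M). -/
open Finset

noncomputable def bernSumPMF {n : ℕ} (p : Fin n → ℝ) (k : ℕ) : ℝ :=
  ∑ x ∈ univ.filter
      (fun x : Fin n → Bool => (univ.filter (fun i => x i = true)).card = k),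
    ∏ i, if x i then p i else 1 - p i

lemma bern_as_sum {n : ℕ} (p : Fin n → ℝ) (k : ℕ) :
    bernSumPMF p k = ∑ x : Fin n → Bool,
      (if (univ.filter (fun i => x i = true)).card = k then (1:ℝ) else 0) *
        ∏ i, if x i then p i else 1 - p i := by
  rw [bernSumPMF, Finset.sum_filter]
  simp [ite_mul]

lemma card_snoc {n : ℕ} (y : Fin n → Bool) (b : Bool) :
    (univ.filter (fun i => (Fin.snoc y b : Fin (n+1) → Bool) i = true)).card
      = (univ.filter (fun i => y i = true)).card + (if b then 1 else 0) := by
  rw [Finset.card_filter, Finset.card_filter, Fin.sum_univ_castSucc]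
  simp [Fin.snoc_castSucc, Fin.snoc_last]

lemma bern_rec {n : ℕ} (p : Fin (n+1) → ℝ) (k : ℕ) :
    bernSumPMF p k = (1 - p (Fin.last n)) * bernSumPMF (Fin.init p) k
      + p (Fin.last n) * (if k = 0 then 0 else bernSumPMF (Fin.init p) (k-1)) := by
  rw [bern_as_sum]
  rw [← Equiv.sum_comp (Fin.snocEquiv (fun _ => Bool))]
  rw [Fintype.sum_prod_type]
  have hsnoc : ∀ (b : Bool) (y : Fin n → Bool),
      (Fin.snocEquiv (fun _ => Bool)) (b, y) = (Fin.snoc y b : Fin (n+1) → Bool) := by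
    intro b y; rfl
  simp only [hsnoc]
  rw [Fintype.sum_bool]
  have hprod : ∀ (y : Fin n → Bool) (b : Bool),
      (∏ i, if (Fin.snoc y b : Fin (n+1) → Bool) i then p i else 1 - p i)
        = (∏ i, if y i then Fin.init p i else 1 - Fin.init p i)
          * (if b then p (Fin.last n) else 1 - p (Fin.last n)) := by
    intro y b
    rw [Fin.prod_univ_castSucc]
    simp [Fin.snoc_castSucc, Fin.snoc_last, Fin.init]
  simp only [hprod, card_snoc]
  simp only [Bool.false_eq_true, if_false, if_true, add_zero]
  cases k with
  | zero =>
    rw [bern_as_sum (Fin.init p) 0, Finset.mul_sum]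
    simp only [Nat.add_one_ne_zero, if_false, zero_mul, Finset.sum_const_zero, zero_add,
      mul_zero, add_zero, ite_self, if_pos rfl]
    rw [if_pos trivial, mul_zero, add_zero]
    apply Finset.sum_congr rfl
    intro x _
    ring
  | succ k =>
    simp only [Nat.add_one_ne_zero, if_false, Nat.add_sub_cancel, Nat.add_right_cancel_iff]
    rw [bern_as_sum (Fin.init p) (k+1), bern_as_sum (Fin.init p) k]
    rw [Finset.mul_sum, Finset.mul_sum, add_comm]
    congr 1 <;> (apply Finset.sum_congr rfl; intro x _; ring)

lemma bern_zero {n : ℕ} (p : Fin n → ℝ) {k : ℕ} (hk : n < k) : bernSumPMF p k = 0 := by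
  rw [bernSumPMF, Finset.filter_false_of_mem, Finset.sum_empty]
  intro x _ h
  have := Finset.card_filter_le univ (fun i => x i = true)
  simp only [Finset.card_univ, Fintype.card_fin] at this
  omega

lemma bern_nonneg {n : ℕ} (p : Fin n → ℝ) (hp : ∀ i, 0 ≤ p i ∧ p i ≤ 1) (k : ℕ) :
    0 ≤ bernSumPMF p k := by
  apply Finset.sum_nonneg
  intro x _
  apply Finset.prod_nonneg
  intro i _
  by_cases h : x i = true <;> simp [h]
  · exact (hp i).1
  · linarith [(hp i).2]

lemma seq_step (n M : ℕ) (q b : ℕ → ℝ) (t : ℝ) (ht0 : 0 ≤ t) (ht1 : t ≤ 1)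
    (hq : ∀ k, 0 ≤ q k) (hqz : ∀ k, n < k → q k = 0)
    (hb0 : b 0 = (1 - t) * q 0)
    (hbs : ∀ k, b (k + 1) = (1 - t) * q (k + 1) + t * q k)
    (hM : M ≤ n)
    (H1 : ∀ j, j < M → q j ≤ q (j + 1))
    (H2 : ∀ j, M ≤ j → j < n → q (j + 1) ≤ q j) :
    ∃ M' ≤ n + 1, (∀ j, j < M' → b j ≤ b (j + 1)) ∧
      (∀ j, M' ≤ j → j < n + 1 → b (j + 1) ≤ b j) := by
  have H2' : ∀ j, M ≤ j → q (j + 1) ≤ q j := by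
    intro j hj
    rcases lt_trichotomy j n with h | h | h
    · exact H2 j hj h
    · rw [h, hqz (n + 1) (by omega)]; exact hq n
    · rw [hqz _ (by omega), hqz _ h]
  have up : ∀ j, j < M → b j ≤ b (j + 1) := by
    intro j hj
    cases j with
    | zero =>
      rw [hb0, hbs 0]
      have h1 := H1 0 hj
      have h0 := hq 0
      nlinarith
    | succ i =>
      rw [hbs i, hbs (i + 1)]
      have h1 := H1 (i + 1) hj
      have h2 := H1 i (by omega)
      nlinarith
  have down : ∀ j, M + 1 ≤ j → b (j + 1) ≤ b j := by
    intro j hj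
    obtain ⟨i, rfl⟩ : ∃ i, j = i + 1 := ⟨j - 1, by omega⟩
    rw [hbs i, hbs (i + 1)]
    have h1 := H2' (i + 1) (by omega)
    have h2 := H2' i (by omega)
    nlinarith
  rcases le_or_gt (b (M + 1)) (b M) with h | h
  · refine ⟨M, by omega, up, fun j hj _ => ?_⟩
    rcases eq_or_lt_of_le hj with rfl | hlt
    · exact h
    · exact down j hlt
  · refine ⟨M + 1, by omega, ?_, fun j hj _ => down j hj⟩
    intro j hj
    rcases Nat.lt_succ_iff_lt_or_eq.mp hj with h' | rfl
    · exact up j h'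
    · exact le_of_lt h

/-- Any sum of independent Bernoulli random variables has a unimodal distribution on
`{0,1,...,n}`: there is a mode `M` such that the pmf is nondecreasing up to `M`
and nonincreasing after `M`. -/
theorem stmt4 {n : ℕ} (p : Fin n → ℝ) (hp : ∀ i, 0 ≤ p i ∧ p i ≤ 1) :
    ∃ M ≤ n, (∀ j, j < M → bernSumPMF p j ≤ bernSumPMF p (j + 1)) ∧
      (∀ j, M ≤ j → j < n → bernSumPMF p (j + 1) ≤ bernSumPMF p j) := by
  induction n with
  | zero =>
    exact ⟨0, le_rfl, fun j hj => absurd hj (Nat.not_lt_zero j),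
      fun j _ hj => absurd hj (Nat.not_lt_zero j)⟩
  | succ n ih =>
    obtain ⟨M, hM, H1, H2⟩ := ih (Fin.init p) (fun i => hp i.castSucc)
    have ht := hp (Fin.last n)
    refine seq_step n M (bernSumPMF (Fin.init p)) (bernSumPMF p) (p (Fin.last n))
      ht.1 ht.2 (bern_nonneg _ (fun i => hp i.castSucc)) (fun k hk => bern_zero _ hk)
      ?_ ?_ hM H1 H2
    · rw [bern_rec]; simp
    · intro k; rw [bern_rec]; simp
end

section
/- Let Y = m + Poisson(λ) and Ŷ = m̂ + Poisson(λ̂) be shifted Poisson random variables with λ, λ̂ > 0 and m, m̂ ∈ ℕ. Then the total variation distance between Y and Ŷ is at most twice their Kolmogorov distance. -/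
/-- The pmf of `m + Poisson(lam)`, a Poisson random variable with mean `lam` shifted by the
nonnegative integer `m`. -/
noncomputable def shiftedPoissonPMF (lam : ℝ) (m : ℕ) (i : ℕ) : ℝ :=
  if m ≤ i then Real.exp (-lam) * lam ^ (i - m) / (i - m).factorial else 0

lemma sp_nonneg {lam : ℝ} (hlam : 0 < lam) (m i : ℕ) : 0 ≤ shiftedPoissonPMF lam m i := by
  unfold shiftedPoissonPMF
  split <;> positivity

lemma sp_pos {lam : ℝ} (hlam : 0 < lam) {m i : ℕ} (h : m ≤ i) : 0 < shiftedPoissonPMF lam m i := by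
  unfold shiftedPoissonPMF
  rw [if_pos h]
  positivity

lemma sp_zero {lam : ℝ} {m i : ℕ} (h : i < m) : shiftedPoissonPMF lam m i = 0 := by
  unfold shiftedPoissonPMF
  rw [if_neg (by omega)]

lemma cast_pos_sub {m i : ℕ} (h : m ≤ i) : (0:ℝ) < (i:ℝ) + 1 - m := by
  have : (m:ℝ) ≤ i := by exact_mod_cast h
  linarith

lemma sp_shift {lam : ℝ} (hlam : 0 < lam) (m : ℕ) :
    HasSum (fun n => shiftedPoissonPMF lam m (n + m)) 1 := by
  have h := ProbabilityTheory.poissonPMFRealSum lam.toNNReal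
  convert h using 2 with n
  unfold shiftedPoissonPMF
  rw [if_pos (Nat.le_add_left m n), Nat.add_sub_cancel,
    Real.coe_toNNReal _ hlam.le]

lemma sp_summable {lam : ℝ} (hlam : 0 < lam) (m : ℕ) :
    Summable (shiftedPoissonPMF lam m) :=
  (summable_nat_add_iff m).mp (sp_shift hlam m).summable

lemma sp_tsum {lam : ℝ} (hlam : 0 < lam) (m : ℕ) :
    ∑' i, shiftedPoissonPMF lam m i = 1 := by
  have h := Summable.sum_add_tsum_nat_add m (sp_summable hlam m)
  rw [(sp_shift hlam m).tsum_eq] at h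
  have h0 : ∑ i ∈ Finset.range m, shiftedPoissonPMF lam m i = 0 :=
    Finset.sum_eq_zero fun i hi => sp_zero (Finset.mem_range.mp hi)
  linarith [h]

lemma sp_succ' {lam : ℝ} (hlam : 0 < lam) {m i : ℕ} (h : m ≤ i) :
    shiftedPoissonPMF lam m (i + 1) * ((i : ℝ) + 1 - m) =
      shiftedPoissonPMF lam m i * lam := by
  unfold shiftedPoissonPMF
  rw [if_pos (h.trans (Nat.le_succ i)), if_pos h]
  have h1 : i + 1 - m = (i - m) + 1 := by omega
  have h2 : ((i - m : ℕ) : ℝ) = (i : ℝ) - m := by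
    push_cast [Nat.cast_sub h]; ring
  rw [h1, pow_succ, Nat.factorial_succ]
  have h4 : ((i - m : ℕ).factorial : ℝ) ≠ 0 := Nat.cast_ne_zero.mpr (i - m).factorial_ne_zero
  have h5 : (i:ℝ) - m + 1 ≠ 0 := by
    have := cast_pos_sub h; intro hc; apply this.ne'; linarith
  push_cast [h2]
  field_simp [h4, h5]
  ring

lemma sp_succ {lam : ℝ} (hlam : 0 < lam) {m i : ℕ} (h : m ≤ i) :
    shiftedPoissonPMF lam m (i + 1) =
      shiftedPoissonPMF lam m i * lam / ((i : ℝ) + 1 - m) := by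
  rw [eq_div_iff (cast_pos_sub h).ne']
  exact sp_succ' hlam h

/-- Sign pattern: nonnegative, then nonpositive, then nonnegative. -/
def SignPat (d : ℕ → ℝ) (a b : ℕ) : Prop :=
  (∀ i, i < a → 0 ≤ d i) ∧ (∀ i, a ≤ i → i < b → d i ≤ 0) ∧ (∀ i, b ≤ i → 0 ≤ d i)

lemma tv_le_core (d : ℕ → ℝ) (hd : Summable d) (habs : Summable fun i => |d i|)
    (htot : ∑' i, d i = 0) (a b : ℕ) (hab : a ≤ b) (hpat : SignPat d a b) :
    (1 / 2) * ∑' i, |d i| ≤ 2 * ⨆ x : ℕ, |∑ i ∈ Finset.range (x + 1), d i| := by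
  obtain ⟨h1, h2, h3⟩ := hpat
  set F : ℕ → ℝ := fun x => ∑ i ∈ Finset.range (x + 1), d i with hF
  have hbdd : BddAbove (Set.range fun x => |F x|) := by
    refine ⟨∑' i, |d i|, ?_⟩
    rintro _ ⟨x, rfl⟩
    exact (Finset.abs_sum_le_sum_abs _ _).trans
      (Summable.sum_le_tsum _ (fun i _ => abs_nonneg _) habs)
  have hsup : ∀ x, |F x| ≤ ⨆ x : ℕ, |F x| := fun x => le_ciSup hbdd x
  set A := ∑ i ∈ Finset.range a, d i with hA
  set B := ∑ i ∈ Finset.Ico a b, d i with hB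
  set C := ∑' i, d (i + b) with hC
  have hA0 : 0 ≤ A := Finset.sum_nonneg fun i hi => h1 i (Finset.mem_range.mp hi)
  have hC0 : 0 ≤ C := tsum_nonneg fun i => h3 _ (Nat.le_add_left b i)
  have hrb : ∑ i ∈ Finset.range b, d i = A + B := by
    rw [hA, hB, Finset.range_eq_Ico, Finset.range_eq_Ico]
    exact (Finset.sum_Ico_consecutive d (Nat.zero_le a) hab).symm
  have hsplit : A + B + C = 0 := by
    have := Summable.sum_add_tsum_nat_add b hd
    rw [htot, hrb] at this
    linarith
  have habs_tail : ∑' i, |d (i + b)| = C := by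
    rw [hC]
    exact tsum_congr fun i => abs_of_nonneg (h3 _ (Nat.le_add_left b i))
  have habs_rb : ∑ i ∈ Finset.range b, |d i| = A - B := by
    rw [Finset.range_eq_Ico, ← Finset.sum_Ico_consecutive _ (Nat.zero_le a) hab,
      ← Finset.range_eq_Ico]
    have e1 : ∑ i ∈ Finset.range a, |d i| = A :=
      Finset.sum_congr rfl fun i hi => abs_of_nonneg (h1 i (Finset.mem_range.mp hi))
    have e2 : ∑ i ∈ Finset.Ico a b, |d i| = -B := by
      rw [hB, ← Finset.sum_neg_distrib]
      exact Finset.sum_congr rfl fun i hi => by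
        have := Finset.mem_Ico.mp hi
        exact abs_of_nonpos (h2 i this.1 this.2)
    rw [e1, e2]; ring
  have htv : ∑' i, |d i| = A - B + C := by
    have := Summable.sum_add_tsum_nat_add b habs
    rw [habs_tail, habs_rb] at this
    linarith
  -- A ≤ sup
  have hAsup : A ≤ ⨆ x : ℕ, |F x| := by
    rcases Nat.eq_zero_or_pos a with ha | ha
    · have : A = 0 := by rw [hA, ha]; simp
      rw [this]
      exact le_trans (abs_nonneg (F 0)) (hsup 0)
    · obtain ⟨a', rfl⟩ : ∃ a', a = a' + 1 := ⟨a - 1, by omega⟩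
      have : A = F a' := rfl
      rw [this]
      exact (le_abs_self _).trans (hsup a')
  have hCsup : C ≤ ⨆ x : ℕ, |F x| := by
    rcases Nat.eq_zero_or_pos b with hb | hb
    · have ha : a = 0 := by omega
      have hBz : B = 0 := by rw [hB, hb, ha]; simp
      have hAz : A = 0 := by rw [hA, ha]; simp
      have hCz : C = 0 := by linarith
      rw [hCz]
      exact le_trans (abs_nonneg (F 0)) (hsup 0)
    · obtain ⟨b', rfl⟩ : ∃ b', b = b' + 1 := ⟨b - 1, by omega⟩
      have hFb : F b' = A + B := hrb
      have : C = |F b'| := by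
        rw [hFb, abs_of_nonpos (by linarith)]
        linarith
      rw [this]; exact hsup b'
  have hrw : (⨆ x : ℕ, |∑ i ∈ Finset.range (x + 1), d i|) = ⨆ x : ℕ, |F x| := rfl
  rw [hrw]
  linarith

lemma sign_pattern (lam lamh : ℝ) (hlam : 0 < lam) (hlamh : 0 < lamh) (m mh : ℕ)
    (hm : m ≤ mh) :
    ∃ a b : ℕ, a ≤ b ∧
      (SignPat (fun i => shiftedPoissonPMF lam m i - shiftedPoissonPMF lamh mh i) a b ∨
       SignPat (fun i => shiftedPoissonPMF lamh mh i - shiftedPoissonPMF lam m i) a b) := by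
  set p := shiftedPoissonPMF lam m with hpdef
  set q := shiftedPoissonPMF lamh mh with hqdef
  set d : ℕ → ℝ := fun i => p i - q i with hddef
  set r : ℕ → ℝ := fun i => p i / q i with hrdef
  set ρ : ℕ → ℝ := fun i => (lam * ((i : ℝ) + 1 - mh)) / (lamh * ((i : ℝ) + 1 - m)) with hρdef
  have hq : ∀ i, mh ≤ i → 0 < q i := fun i hi => sp_pos hlamh hi
  have hp0 : ∀ i, 0 ≤ p i := fun i => sp_nonneg hlam m i
  have hr0 : ∀ i, mh ≤ i → 0 ≤ r i := fun i hi => div_nonneg (hp0 i) (hq i hi).le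
  have hrstep : ∀ i, mh ≤ i → r (i + 1) = r i * ρ i := by
    intro i hi
    have hmi : m ≤ i := hm.trans hi
    have h1 := sp_succ hlam hmi
    have h2 := sp_succ hlamh hi
    have c1 : (0:ℝ) < (i:ℝ) + 1 - m := cast_pos_sub hmi
    have c2 : (0:ℝ) < (i:ℝ) + 1 - mh := cast_pos_sub hi
    simp only [hrdef, hρdef, ← hpdef, ← hqdef] at *
    rw [h1, h2]
    have hqi := hq i hi
    field_simp
  have hρmono : ∀ i j, m ≤ i → i ≤ j → ρ i ≤ ρ j := by
    intro i j hi hij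
    have c1 : (0:ℝ) < (i:ℝ) + 1 - m := cast_pos_sub hi
    have c2 : (0:ℝ) < (j:ℝ) + 1 - m := cast_pos_sub (hi.trans hij)
    have hMH : (m:ℝ) ≤ mh := by exact_mod_cast hm
    have hxy : (i:ℝ) ≤ j := by exact_mod_cast hij
    simp only [hρdef]
    rw [div_le_div_iff₀ (mul_pos hlamh c1) (mul_pos hlamh c2)]
    nlinarith [mul_nonneg (mul_nonneg hlam.le hlamh.le)
      (mul_nonneg (sub_nonneg.2 hMH) (sub_nonneg.2 hxy))]
  have hiff : ∀ i, mh ≤ i → (0 ≤ d i ↔ 1 ≤ r i) := by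
    intro i hi
    rw [hddef]
    simp only
    rw [sub_nonneg, hrdef]
    exact (one_le_div (hq i hi)).symm
  have key : ∀ i, mh ≤ i → d i < 0 → 0 ≤ d (i + 1) → ∀ k, i + 1 ≤ k → 0 ≤ d k := by
    intro i hi hdi hdi1
    have hri : r i < 1 := by
      by_contra hc
      exact absurd ((hiff i hi).mpr (not_lt.mp hc)) (not_le.mpr hdi)
    have hri1 : 1 ≤ r (i + 1) := (hiff (i+1) (hi.trans (Nat.le_succ i))).mp hdi1
    have hρi : 1 ≤ ρ i := by
      by_contra hc
      push_neg at hc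
      have h1 : r (i + 1) = r i * ρ i := hrstep i hi
      have h2 : r i * ρ i ≤ r i := mul_le_of_le_one_right (hr0 i hi) hc.le
      linarith
    have main : ∀ k, i + 1 ≤ k → 1 ≤ r k := by
      intro k hk
      induction k, hk using Nat.le_induction with
      | base => exact hri1
      | succ n hn ih =>
        have hρn : ρ i ≤ ρ n := hρmono i n (hm.trans hi) (by omega)
        rw [hrstep n (by omega)]
        nlinarith
    intro k hk
    exact (hiff k (by omega)).mpr (main k hk)
  have hd_lt_mh : ∀ i, i < mh → 0 ≤ d i := by
    intro i hi
    have : q i = 0 := sp_zero hi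
    simp only [hddef, this, sub_zero]
    exact hp0 i
  by_cases hex : ∃ i, d i < 0
  · classical
    obtain ⟨a, ha, hamin⟩ : ∃ a, d a < 0 ∧ ∀ j, j < a → 0 ≤ d j :=
      ⟨Nat.find hex, Nat.find_spec hex, fun j hj => not_lt.mp (Nat.find_min hex hj)⟩
    have hamh : mh ≤ a := by
      by_contra hc
      exact absurd (hd_lt_mh a (not_le.mp hc)) (not_le.mpr ha)
    by_cases hpos : ∃ j, a < j ∧ 0 ≤ d j
    · obtain ⟨b, ⟨hab, hdb⟩, hbmin⟩ :
          ∃ b, (a < b ∧ 0 ≤ d b) ∧ ∀ j, j < b → ¬(a < j ∧ 0 ≤ d j) :=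
        ⟨Nat.find hpos, Nat.find_spec hpos, fun j hj => Nat.find_min hpos hj⟩
      have hmid : ∀ i, a ≤ i → i < b → d i ≤ 0 := by
        intro i hia hib
        rcases eq_or_lt_of_le hia with rfl | hlt
        · exact ha.le
        · have := hbmin i hib
          push_neg at this
          exact (this hlt).le
      refine ⟨a, b, hab.le, Or.inl ⟨hamin, hmid, ?_⟩⟩
      intro k hk
      obtain ⟨b', rfl⟩ : ∃ b', b = b' + 1 := ⟨b - 1, by omega⟩
      have hb'a : a ≤ b' := by omega
      have hb'mh : mh ≤ b' := hamh.trans hb'a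
      have hdb' : d b' < 0 := by
        rcases eq_or_lt_of_le hb'a with rfl | hlt
        · exact ha
        · have := hbmin b' (by omega)
          push_neg at this
          exact this hlt
      exact key b' hb'mh hdb' hdb k hk
    · push_neg at hpos
      refine ⟨0, a, Nat.zero_le a, Or.inr ⟨fun i hi => absurd hi (Nat.not_lt_zero i), ?_, ?_⟩⟩
      · intro i _ hia
        simp only [hddef] at hamin ⊢
        linarith [hamin i hia]
      · intro i hia
        rcases eq_or_lt_of_le hia with rfl | hlt
        · simp only [hddef] at ha ⊢; linarith
        · have := hpos i hlt
          simp only [hddef] at this ⊢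
          linarith
  · push_neg at hex
    exact ⟨0, 0, le_refl 0, Or.inl ⟨fun i hi => absurd hi (Nat.not_lt_zero i),
      fun i _ hi => absurd hi (Nat.not_lt_zero i), fun i _ => hex i⟩⟩

lemma tv_le_core_neg (d : ℕ → ℝ) (hd : Summable d) (habs : Summable fun i => |d i|)
    (htot : ∑' i, d i = 0) (a b : ℕ) (hab : a ≤ b) (hpat : SignPat (fun i => -d i) a b) :
    (1 / 2) * ∑' i, |d i| ≤ 2 * ⨆ x : ℕ, |∑ i ∈ Finset.range (x + 1), d i| := by
  have h := tv_le_core (fun i => -d i) hd.neg (by simpa using habs)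
    (by rw [tsum_neg, htot, neg_zero]) a b hab hpat
  simpa [abs_neg, Finset.sum_neg_distrib] using h

/-- For shifted Poisson random variables `Y = m + Poisson(λ)` and `Ŷ = m̂ + Poisson(λ̂)`,
the total variation distance is at most twice the Kolmogorov distance. -/
theorem stmt5 (lam lamh : ℝ) (hlam : 0 < lam) (hlamh : 0 < lamh) (m mh : ℕ) :
    (1 / 2) * ∑' i : ℕ, |shiftedPoissonPMF lam m i - shiftedPoissonPMF lamh mh i| ≤
      2 * ⨆ x : ℕ,
        |∑ i ∈ Finset.range (x + 1),
          (shiftedPoissonPMF lam m i - shiftedPoissonPMF lamh mh i)| := by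
  set p := shiftedPoissonPMF lam m with hpdef
  set q := shiftedPoissonPMF lamh mh with hqdef
  have hps : Summable p := sp_summable hlam m
  have hqs : Summable q := sp_summable hlamh mh
  have hd : Summable fun i => p i - q i := hps.sub hqs
  have habs : Summable fun i => |p i - q i| := by
    apply Summable.of_nonneg_of_le (fun i => abs_nonneg _) (fun i => ?_) (hps.add hqs)
    calc |p i - q i| ≤ |p i| + |q i| := abs_sub _ _
      _ = p i + q i := by
          rw [abs_of_nonneg (sp_nonneg hlam m i), abs_of_nonneg (sp_nonneg hlamh mh i)]
  have htot : ∑' i, (p i - q i) = 0 := by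
    rw [Summable.tsum_sub hps hqs, hpdef, hqdef, sp_tsum hlam m, sp_tsum hlamh mh, sub_self]
  have hflip : (fun i => q i - p i) = fun i => -(p i - q i) := by
    funext i; ring
  rcases le_total m mh with hm | hm
  · obtain ⟨a, b, hab, hpat | hpat⟩ := sign_pattern lam lamh hlam hlamh m mh hm
    · exact tv_le_core _ hd habs htot a b hab hpat
    · rw [hflip] at hpat
      exact tv_le_core_neg _ hd habs htot a b hab hpat
  · obtain ⟨a, b, hab, hpat | hpat⟩ := sign_pattern lamh lam hlamh hlam mh m hm
    · rw [hflip] at hpat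
      exact tv_le_core_neg _ hd habs htot a b hab hpat
    · exact tv_le_core _ hd habs htot a b hab hpat
end

section
/- If λ ≥ λ̂ > 0 and m ≥ 0, and Y' = m + Poisson(λ), Ŷ' = Poisson(λ̂), then the ratio R_i = Pr[Y' = i]/Pr[Ŷ' = i] is nondecreasing in i on the support, so the sequence Pr[Y'=i] − Pr[Ŷ'=i] changes sign at most once, and therefore the total variation distance between Y' and Ŷ' equals their Kolmogorov distance. -/
namespace Stmt7Aux

lemma hasSum_poisson {x : ℝ} (hx : 0 ≤ x) :
    HasSum (fun n : ℕ => Real.exp (-x) * x ^ n / n.factorial) 1 := by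
  have h := ProbabilityTheory.poissonPMFRealSum x.toNNReal
  simpa [ProbabilityTheory.poissonPMFReal, Real.coe_toNNReal x hx] using h

lemma g_def (lamh : ℝ) (i : ℕ) :
    shiftedPoissonPMF lamh 0 i = Real.exp (-lamh) * lamh ^ i / i.factorial := by
  simp [shiftedPoissonPMF]

lemma g_pos {lamh : ℝ} (hl : 0 < lamh) (i : ℕ) : 0 < shiftedPoissonPMF lamh 0 i := by
  rw [g_def]; positivity

lemma f_nonneg {lam : ℝ} (hl : 0 ≤ lam) (m i : ℕ) : 0 ≤ shiftedPoissonPMF lam m i := by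
  unfold shiftedPoissonPMF; split
  · positivity
  · exact le_refl 0

lemma f_eq (lam : ℝ) {m i : ℕ} (h : m ≤ i) :
    shiftedPoissonPMF lam m i = Real.exp (-lam) * lam ^ (i - m) / (i - m).factorial :=
  if_pos h

lemma f_zero (lam : ℝ) {m i : ℕ} (h : i < m) : shiftedPoissonPMF lam m i = 0 :=
  if_neg (by omega)

lemma f_succ (lam : ℝ) {m i : ℕ} (h : m ≤ i) :
    shiftedPoissonPMF lam m (i + 1) =
      shiftedPoissonPMF lam m i * (lam / ((i - m : ℕ) + 1)) := by
  rw [f_eq lam (h.trans (Nat.le_succ i)), f_eq lam h]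
  have h2 : i + 1 - m = (i - m) + 1 := by omega
  rw [h2, Nat.factorial_succ, pow_succ]
  have h3 : ((i - m).factorial : ℝ) ≠ 0 := Nat.cast_ne_zero.mpr (i - m).factorial_ne_zero
  push_cast
  field_simp

lemma g_succ (lamh : ℝ) (i : ℕ) :
    shiftedPoissonPMF lamh 0 (i + 1) =
      shiftedPoissonPMF lamh 0 i * (lamh / ((i : ℝ) + 1)) := by
  rw [g_def, g_def, Nat.factorial_succ, pow_succ]
  have h3 : (i.factorial : ℝ) ≠ 0 := Nat.cast_ne_zero.mpr i.factorial_ne_zero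
  push_cast
  field_simp

lemma cross {lam lamh : ℝ} (hlamh : 0 < lamh) (hge : lamh ≤ lam) {m i : ℕ} (h : m ≤ i) :
    shiftedPoissonPMF lam m i * shiftedPoissonPMF lamh 0 (i + 1) ≤
      shiftedPoissonPMF lam m (i + 1) * shiftedPoissonPMF lamh 0 i := by
  have hlam : 0 < lam := lt_of_lt_of_le hlamh hge
  rw [f_succ lam h, g_succ lamh]
  have hdiv : lamh / ((i : ℝ) + 1) ≤ lam / ((i - m : ℕ) + 1) := by
    apply div_le_div₀ hlam.le hge (by positivity)
    have : (i - m : ℕ) ≤ i := Nat.sub_le i m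
    push_cast
    have : ((i - m : ℕ) : ℝ) ≤ (i : ℝ) := by exact_mod_cast this
    linarith
  have hnn : 0 ≤ shiftedPoissonPMF lam m i * shiftedPoissonPMF lamh 0 i :=
    mul_nonneg (f_nonneg hlam.le m i) (g_pos hlamh i).le
  calc shiftedPoissonPMF lam m i * (shiftedPoissonPMF lamh 0 i * (lamh / ((i : ℝ) + 1)))
      = shiftedPoissonPMF lam m i * shiftedPoissonPMF lamh 0 i * (lamh / ((i : ℝ) + 1)) := by ring
    _ ≤ shiftedPoissonPMF lam m i * shiftedPoissonPMF lamh 0 i * (lam / ((i - m : ℕ) + 1)) :=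
        mul_le_mul_of_nonneg_left hdiv hnn
    _ = shiftedPoissonPMF lam m i * (lam / ((i - m : ℕ) + 1)) * shiftedPoissonPMF lamh 0 i := by
        ring

lemma ratio_mono {lam lamh : ℝ} (hlamh : 0 < lamh) (hge : lamh ≤ lam) {m i : ℕ} (h : m ≤ i) :
    shiftedPoissonPMF lam m i / shiftedPoissonPMF lamh 0 i ≤
      shiftedPoissonPMF lam m (i + 1) / shiftedPoissonPMF lamh 0 (i + 1) := by
  rw [div_le_div_iff₀ (g_pos hlamh i) (g_pos hlamh (i + 1))]
  exact cross hlamh hge h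

lemma step {lam lamh : ℝ} (hlamh : 0 < lamh) (hge : lamh ≤ lam) {m i : ℕ}
    (h : shiftedPoissonPMF lamh 0 i ≤ shiftedPoissonPMF lam m i) :
    shiftedPoissonPMF lamh 0 (i + 1) ≤ shiftedPoissonPMF lam m (i + 1) := by
  have hmi : m ≤ i := by
    by_contra hc
    have h0 : shiftedPoissonPMF lam m i = 0 := f_zero lam (by omega)
    have := g_pos hlamh i
    rw [h0] at h; linarith
  have hc := cross hlamh hge hmi
  have h1 : shiftedPoissonPMF lamh 0 (i + 1) * shiftedPoissonPMF lamh 0 i ≤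
      shiftedPoissonPMF lam m (i + 1) * shiftedPoissonPMF lamh 0 i := by
    calc shiftedPoissonPMF lamh 0 (i + 1) * shiftedPoissonPMF lamh 0 i
        ≤ shiftedPoissonPMF lamh 0 (i + 1) * shiftedPoissonPMF lam m i :=
          mul_le_mul_of_nonneg_left h (g_pos hlamh (i + 1)).le
      _ = shiftedPoissonPMF lam m i * shiftedPoissonPMF lamh 0 (i + 1) := by ring
      _ ≤ shiftedPoissonPMF lam m (i + 1) * shiftedPoissonPMF lamh 0 i := hc
  exact le_of_mul_le_mul_right h1 (g_pos hlamh i)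

lemma f_hasSum {lam : ℝ} (hl : 0 ≤ lam) (m : ℕ) : HasSum (shiftedPoissonPMF lam m) 1 := by
  have h1 : HasSum (fun n : ℕ => shiftedPoissonPMF lam m (n + m)) 1 := by
    have h := hasSum_poisson hl
    apply h.congr_fun
    intro n
    rw [f_eq lam (Nat.le_add_left m n), Nat.add_sub_cancel]
  have h2 := (hasSum_nat_add_iff (f := shiftedPoissonPMF lam m) m).mp h1
  have h3 : ∑ i ∈ Finset.range m, shiftedPoissonPMF lam m i = 0 :=
    Finset.sum_eq_zero fun i hi => f_zero lam (Finset.mem_range.mp hi)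
  rwa [h3, add_zero] at h2

lemma exists_ge {lam lamh : ℝ} (hlamh : 0 < lamh) (hge : lamh ≤ lam) (m : ℕ) :
    ∃ N, shiftedPoissonPMF lamh 0 N ≤ shiftedPoissonPMF lam m N := by
  by_contra hc
  push_neg at hc
  have hlam : 0 < lam := lt_of_lt_of_le hlamh hge
  have hf := f_hasSum hlam.le m
  have hg := f_hasSum hlamh.le 0
  have hlt : (∑' i, shiftedPoissonPMF lam m i) < ∑' i, shiftedPoissonPMF lamh 0 i :=
    Summable.tsum_lt_tsum (fun i => (hc i).le) (hc 0) hf.summable hg.summable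
  rw [hf.tsum_eq, hg.tsum_eq] at hlt
  exact lt_irrefl 1 hlt

end Stmt7Aux

namespace Stmt7Aux

lemma tv_eq_kol (D : ℕ → ℝ) (istar : ℕ) (hDs : HasSum D 0)
    (hDlow : ∀ i < istar, D i ≤ 0) (hDhigh : ∀ i, istar ≤ i → 0 ≤ D i) :
    (1 / 2) * ∑' i : ℕ, |D i| =
      ⨆ x : ℕ, |∑ i ∈ Finset.range (x + 1), D i| := by
  have hDsum : Summable D := hDs.summable
  have habs : Summable fun i => |D i| := hDsum.abs
  have hDtot : ∑' i, D i = 0 := hDs.tsum_eq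
  have hshift : ∀ a : ℕ, Summable fun j => D (j + a) := fun a =>
    (summable_nat_add_iff a).mpr hDsum
  have tailrec : ∀ a b : ℕ, a ≤ b →
      (∑' j, D (j + a)) = (∑ j ∈ Finset.range (b - a), D (j + a)) + ∑' j, D (j + b) := by
    intro a b hab
    have h1 := Summable.sum_add_tsum_nat_add (f := fun j => D (j + a)) (b - a) (hshift a)
    have h2 : (fun j => D (j + (b - a) + a)) = fun j => D (j + b) := by
      funext j; congr 1; omega
    simp only [h2] at h1
    linarith [h1]
  have tail_nonneg : ∀ a, istar ≤ a → 0 ≤ ∑' j, D (j + a) := fun a ha =>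
    tsum_nonneg fun j => hDhigh _ (le_trans ha (Nat.le_add_left a j))
  have hpart : ∀ x : ℕ, (∑ i ∈ Finset.range (x + 1), D i) + (∑' j, D (j + (x + 1))) = 0 := by
    intro x
    rw [Summable.sum_add_tsum_nat_add (x + 1) hDsum]
    exact hDtot
  set T := ∑' j, D (j + istar) with hT
  have habsF : ∀ x : ℕ, |∑ i ∈ Finset.range (x + 1), D i| = ∑' j, D (j + (x + 1)) := by
    intro x
    have hx := hpart x
    have hF : (∑ i ∈ Finset.range (x + 1), D i) = -∑' j, D (j + (x + 1)) := by linarith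
    rcases le_or_gt (x + 1) istar with hcase | hcase
    · have hnp : (∑ i ∈ Finset.range (x + 1), D i) ≤ 0 :=
        Finset.sum_nonpos fun i hi => hDlow i (by have := Finset.mem_range.mp hi; omega)
      rw [abs_of_nonpos hnp, hF, neg_neg]
    · have hnn : 0 ≤ ∑' j, D (j + (x + 1)) := tail_nonneg _ (by omega)
      rw [hF, abs_neg, abs_of_nonneg hnn]
  have hbound : ∀ x : ℕ, (∑' j, D (j + (x + 1))) ≤ T := by
    intro x
    rcases le_or_gt (x + 1) istar with hcase | hcase
    · have h1 := tailrec (x + 1) istar hcase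
      have h2 : (∑ j ∈ Finset.range (istar - (x + 1)), D (j + (x + 1))) ≤ 0 :=
        Finset.sum_nonpos fun j hj => hDlow _ (by have := Finset.mem_range.mp hj; omega)
      rw [hT]; linarith [h1]
    · have h1 := tailrec istar (x + 1) hcase.le
      have h2 : 0 ≤ ∑ j ∈ Finset.range ((x + 1) - istar), D (j + istar) :=
        Finset.sum_nonneg fun j hj => hDhigh _ (Nat.le_add_left istar j)
      rw [hT]; linarith [h1]
  have hLHS : (∑' i, |D i|) = 2 * T := by
    have h1 := Summable.sum_add_tsum_nat_add (f := fun i => |D i|) istar habs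
    have h2 : (∑ i ∈ Finset.range istar, |D i|) = ∑ i ∈ Finset.range istar, -(D i) :=
      Finset.sum_congr rfl fun i hi => abs_of_nonpos (hDlow i (Finset.mem_range.mp hi))
    rw [Finset.sum_neg_distrib] at h2
    have h3 : (∑' j, |D (j + istar)|) = T := by
      rw [hT]; exact tsum_congr fun j => abs_of_nonneg (hDhigh _ (Nat.le_add_left istar j))
    have h4 := Summable.sum_add_tsum_nat_add (f := D) istar hDsum
    rw [hDtot] at h4
    rw [← h1, h2, h3]
    rw [← hT] at h4
    linarith [h4]
  have hbdd : BddAbove (Set.range fun x : ℕ => |∑ i ∈ Finset.range (x + 1), D i|) := by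
    refine ⟨T, ?_⟩
    rintro y ⟨x, rfl⟩
    dsimp only
    rw [habsF x]; exact hbound x
  have hsup_le : (⨆ x : ℕ, |∑ i ∈ Finset.range (x + 1), D i|) ≤ T :=
    ciSup_le fun x => by rw [habsF x]; exact hbound x
  have hle_sup : T ≤ ⨆ x : ℕ, |∑ i ∈ Finset.range (x + 1), D i| := by
    rcases Nat.eq_zero_or_pos istar with h0 | hpos
    · have hT0 : T = 0 := by
        rw [hT, h0]
        have hfun : (fun j => D (j + 0)) = D := by funext j; rw [Nat.add_zero]
        rw [hfun, hDtot]
      rw [hT0]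
      exact le_trans (abs_nonneg _) (le_ciSup hbdd 0)
    · obtain ⟨s, hs⟩ : ∃ s, istar = s + 1 := ⟨istar - 1, by omega⟩
      have hle := le_ciSup hbdd s
      rw [habsF s] at hle
      rw [hT, hs]
      exact hle
  rw [hLHS]
  linarith [hsup_le, hle_sup]

end Stmt7Aux

/-- For `λ ≥ λ̂ > 0` and `m ≥ 0`, with `Y' = m + Poisson(λ)` and `Ŷ' = Poisson(λ̂)`:
the likelihood ratio is nondecreasing on the support, the difference of pmfs changes sign
at most once, and hence the total variation distance equals the Kolmogorov distance. -/
theorem stmt7 (lam lamh : ℝ) (hlamh : 0 < lamh) (hge : lamh ≤ lam) (m : ℕ) :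
    (∀ i : ℕ, m ≤ i →
      shiftedPoissonPMF lam m i / shiftedPoissonPMF lamh 0 i ≤
        shiftedPoissonPMF lam m (i + 1) / shiftedPoissonPMF lamh 0 (i + 1)) ∧
    (∃ istar : ℕ,
      (∀ i < istar, shiftedPoissonPMF lam m i ≤ shiftedPoissonPMF lamh 0 i) ∧
      (∀ i, istar ≤ i → shiftedPoissonPMF lamh 0 i ≤ shiftedPoissonPMF lam m i)) ∧
    (1 / 2) * ∑' i : ℕ, |shiftedPoissonPMF lam m i - shiftedPoissonPMF lamh 0 i| =
      ⨆ x : ℕ,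
        |∑ i ∈ Finset.range (x + 1),
          (shiftedPoissonPMF lam m i - shiftedPoissonPMF lamh 0 i)| := by
  have hlam : 0 < lam := lt_of_lt_of_le hlamh hge
  classical
  have hex : ∃ n, shiftedPoissonPMF lamh 0 n ≤ shiftedPoissonPMF lam m n :=
    Stmt7Aux.exists_ge hlamh hge m
  set istar := Nat.find hex with histar
  have hhigh : ∀ i, istar ≤ i → shiftedPoissonPMF lamh 0 i ≤ shiftedPoissonPMF lam m i := by
    intro i hi
    induction i, hi using Nat.le_induction with
    | base => exact Nat.find_spec hex
    | succ n hn ih => exact Stmt7Aux.step hlamh hge ih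
  have hlow : ∀ i < istar, shiftedPoissonPMF lam m i ≤ shiftedPoissonPMF lamh 0 i :=
    fun i hi => (not_le.mp (Nat.find_min hex hi)).le
  refine ⟨fun i hi => Stmt7Aux.ratio_mono hlamh hge hi, ⟨istar, hlow, hhigh⟩, ?_⟩
  have hDs : HasSum (fun i => shiftedPoissonPMF lam m i - shiftedPoissonPMF lamh 0 i) 0 := by
    simpa using (Stmt7Aux.f_hasSum hlam.le m).sub (Stmt7Aux.f_hasSum hlamh.le 0)
  exact Stmt7Aux.tv_eq_kol _ istar hDs
    (fun i hi => sub_nonpos.mpr (hlow i hi))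
    (fun i hi => sub_nonneg.mpr (hhigh i hi))
end

section
/- If two probability distributions P and Q on the integers have at most two crossings (the sign of P(i) − Q(i) changes at most twice as i increases), then the total variation distance between P and Q is at most twice their Kolmogorov distance. -/
private lemma aux9 (f : ℤ → ℝ) (hfs : Summable f) (hf0 : ∑' i : ℤ, f i = 0)
    (a b : ℤ) (hab : a ≤ b)
    (h : ((∀ i < a, f i ≤ 0) ∧ (∀ i, a ≤ i → i < b → 0 ≤ f i) ∧ (∀ i, b ≤ i → f i ≤ 0)) ∨
         ((∀ i < a, 0 ≤ f i) ∧ (∀ i, a ≤ i → i < b → f i ≤ 0) ∧ (∀ i, b ≤ i → 0 ≤ f i))) :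
    (1 / 2) * ∑' i : ℤ, |f i| ≤ 2 * ⨆ x : ℤ, |∑' i : ℤ, if i ≤ x then f i else 0| := by
  have hfabs : Summable (fun i => |f i|) := hfs.abs
  set F : ℤ → ℝ := fun x => ∑' i : ℤ, if i ≤ x then f i else 0 with hFdef
  have hgs : ∀ x : ℤ, Summable (fun i : ℤ => if i ≤ x then f i else 0) := by
    intro x
    apply Summable.of_norm_bounded hfabs
    intro i
    by_cases h : i ≤ x <;> simp [h, abs_nonneg]
  have hFb : ∀ x : ℤ, |F x| ≤ ∑' i, |f i| := by
    intro x
    calc |F x| ≤ ∑' i : ℤ, |if i ≤ x then f i else 0| := by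
          simpa [Real.norm_eq_abs] using norm_tsum_le_tsum_norm
            (f := fun i : ℤ => if i ≤ x then f i else 0) (by
              simpa [Real.norm_eq_abs] using (hgs x).abs)
      _ ≤ ∑' i, |f i| := by
          apply Summable.tsum_le_tsum _ (hgs x).abs hfabs
          intro i
          by_cases h : i ≤ x <;> simp [h, abs_nonneg]
  have hbdd : BddAbove (Set.range fun x : ℤ => |F x|) := by
    refine ⟨∑' i, |f i|, ?_⟩
    rintro y ⟨x, rfl⟩
    exact hFb x
  have hK : ∀ x : ℤ, |F x| ≤ ⨆ x : ℤ, |F x| := fun x => le_ciSup hbdd x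
  set K : ℝ := ⨆ x : ℤ, |F x| with hKdef
  -- positive part
  set p : ℤ → ℝ := fun i => max (f i) 0 with hpdef
  have hps : Summable p := by
    apply Summable.of_norm_bounded hfabs
    intro i
    simp only [Real.norm_eq_abs, hpdef]
    rcases le_total (f i) 0 with h | h
    · simp [max_eq_right h, abs_nonneg]
    · simp [max_eq_left h, abs_of_nonneg h]
  have habs2 : ∑' i, |f i| = 2 * ∑' i, p i := by
    have h1 : ∀ i, |f i| = 2 * p i - f i := by
      intro i
      rcases le_total (f i) 0 with h | h
      · simp [hpdef, max_eq_right h, abs_of_nonpos h]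
      · simp [hpdef, max_eq_left h, abs_of_nonneg h]; ring
    calc ∑' i, |f i| = ∑' i, (2 * p i - f i) := tsum_congr h1
      _ = 2 * ∑' i, p i - ∑' i, f i := by
          rw [Summable.tsum_sub (hps.mul_left 2) hfs, tsum_mul_left]
      _ = 2 * ∑' i, p i := by rw [hf0]; ring
  -- the middle block sum
  have hD : F (b - 1) - F (a - 1) = ∑' i : ℤ, (if a ≤ i ∧ i ≤ b - 1 then f i else 0) := by
    rw [hFdef]
    simp only
    rw [← Summable.tsum_sub (hgs (b - 1)) (hgs (a - 1))]
    apply tsum_congr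
    intro i
    split_ifs <;> (try ring) <;> omega
  have hmid : Summable (fun i : ℤ => if a ≤ i ∧ i ≤ b - 1 then f i else 0) := by
    apply Summable.of_norm_bounded hfabs
    intro i
    by_cases h : a ≤ i ∧ i ≤ b - 1 <;> simp only [h, and_self, ↓reduceIte, Real.norm_eq_abs, norm_zero, le_refl, abs_nonneg]
  have hDbound : |F (b - 1) - F (a - 1)| ≤ 2 * K := by
    calc |F (b - 1) - F (a - 1)| ≤ |F (b - 1)| + |F (a - 1)| := abs_sub _ _
      _ ≤ K + K := add_le_add (hK _) (hK _)
      _ = 2 * K := by ring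
  have key : ∑' i, p i ≤ 2 * K := by
    rcases h with ⟨h1, h2, h3⟩ | ⟨h1, h2, h3⟩
    · have hpeq : ∀ i, p i = if a ≤ i ∧ i ≤ b - 1 then f i else 0 := by
        intro i
        by_cases h : a ≤ i ∧ i ≤ b - 1
        · exact if_pos h ▸ max_eq_left (h2 i h.1 (by omega))
        · rw [if_neg h]
          rcases lt_or_ge i a with hi | hi
          · exact max_eq_right (h1 i hi)
          · exact max_eq_right (h3 i (by omega))
      calc ∑' i, p i = F (b - 1) - F (a - 1) := by rw [hD]; exact tsum_congr hpeq
        _ ≤ |F (b - 1) - F (a - 1)| := le_abs_self _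
        _ ≤ 2 * K := hDbound
    · have hpeq : ∀ i, p i = f i - (if a ≤ i ∧ i ≤ b - 1 then f i else 0) := by
        intro i
        by_cases h : a ≤ i ∧ i ≤ b - 1
        · rw [if_pos h, sub_self]
          exact max_eq_right (h2 i h.1 (by omega))
        · rw [if_neg h, sub_zero]
          rcases lt_or_ge i a with hi | hi
          · exact max_eq_left (h1 i hi)
          · exact max_eq_left (h3 i (by omega))
      calc ∑' i, p i = ∑' i, f i - (F (b - 1) - F (a - 1)) := by
            rw [hD, ← Summable.tsum_sub hfs hmid]; exact tsum_congr hpeq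
        _ = -(F (b - 1) - F (a - 1)) := by rw [hf0]; ring
        _ ≤ |F (b - 1) - F (a - 1)| := neg_le_abs _
        _ ≤ 2 * K := hDbound
  calc (1 / 2) * ∑' i, |f i| = ∑' i, p i := by rw [habs2]; ring
    _ ≤ 2 * K := key

/-- If two probability distributions on ℤ have at most two crossings (the sign of `P - Q`
changes at most twice), then their total variation distance is at most twice their
Kolmogorov distance. -/
theorem stmt9 (P Q : ℤ → ℝ)
    (hP0 : ∀ i, 0 ≤ P i) (hPs : Summable P) (hP1 : ∑' i : ℤ, P i = 1)
    (hQ0 : ∀ i, 0 ≤ Q i) (hQs : Summable Q) (hQ1 : ∑' i : ℤ, Q i = 1)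
    (hcross : ∃ a b : ℤ, a ≤ b ∧
      (((∀ i < a, P i ≤ Q i) ∧ (∀ i, a ≤ i → i < b → Q i ≤ P i) ∧
          (∀ i, b ≤ i → P i ≤ Q i)) ∨
       ((∀ i < a, Q i ≤ P i) ∧ (∀ i, a ≤ i → i < b → P i ≤ Q i) ∧
          (∀ i, b ≤ i → Q i ≤ P i)))) :
    (1 / 2) * ∑' i : ℤ, |P i - Q i| ≤
      2 * ⨆ x : ℤ, |∑' i : ℤ, if i ≤ x then P i - Q i else 0| := by
  obtain ⟨a, b, hab, hcase⟩ := hcross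
  have hf0 : ∑' i : ℤ, (P i - Q i) = 0 := by
    rw [Summable.tsum_sub hPs hQs, hP1, hQ1]; ring
  refine aux9 (fun i => P i - Q i) (hPs.sub hQs) hf0 a b hab ?_
  rcases hcase with ⟨h1, h2, h3⟩ | ⟨h1, h2, h3⟩
  · exact Or.inl ⟨fun i hi => sub_nonpos.mpr (h1 i hi),
      fun i hi hi' => sub_nonneg.mpr (h2 i hi hi'),
      fun i hi => sub_nonpos.mpr (h3 i hi)⟩
  · exact Or.inr ⟨fun i hi => sub_nonneg.mpr (h1 i hi),
      fun i hi hi' => sub_nonpos.mpr (h2 i hi hi'),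
      fun i hi => sub_nonneg.mpr (h3 i hi)⟩
end

section
/- Let X be a random variable on {0,...,n} with cdf F_X, let Z_1,...,Z_k be i.i.d. copies of X, and let F̂_X(ℓ) = (1/k)·#{i : Z_i ≤ ℓ} be the empirical cdf. If k = 4/(δ·ε²) then with probability at least 1 − δ, max_{0 ≤ ℓ ≤ n} |F̂_X(ℓ) − F_X(ℓ)| ≤ ε. -/
open MeasureTheory

/-- The empirical cdf at `ℓ` of the samples `z`. -/
noncomputable def empCDF {n k : ℕ} (z : Fin k → Fin (n + 1)) (ℓ : ℕ) : ℝ :=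
  ((Finset.univ.filter (fun i => (z i : ℕ) ≤ ℓ)).card : ℝ) / k

open Finset

variable {n k : ℕ}

noncomputable def WW (q : Fin (n+1) → ℝ) (z : Fin k → Fin (n+1)) : ℝ := ∏ i, q (z i)

lemma sum_WW (q : Fin (n+1) → ℝ) (hq1 : ∑ x, q x = 1) :
    ∑ z : Fin k → Fin (n+1), WW q z = 1 := by
  have := Finset.prod_univ_sum (fun _ : Fin k => (univ : Finset (Fin (n+1)))) (fun _ x => q x)
  simp only [hq1, prod_const_one] at this
  rw [Fintype.piFinset_univ] at this
  simpa [WW] using this.symm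

lemma extract (q : Fin (n+1) → ℝ) (hq1 : ∑ x, q x = 1) (i : Fin k)
    (G : Fin (n+1) → ℝ) (H : (Fin k → Fin (n+1)) → ℝ)
    (hH : ∀ z x, H (Function.update z i x) = H z) :
    ∑ z : Fin k → Fin (n+1), WW q z * (G (z i) * H z)
      = (∑ x, q x * G x) * ∑ z : Fin k → Fin (n+1), WW q z * H z := by
  classical
  set e := (Equiv.funSplitAt i (Fin (n+1))).symm with he
  have key : ∀ F : (Fin k → Fin (n+1)) → ℝ, ∑ z : Fin k → Fin (n+1), F z
      = ∑ x : Fin (n+1), ∑ y : { j // j ≠ i } → Fin (n+1), F (e (x, y)) := by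
    intro F
    calc ∑ z : Fin k → Fin (n+1), F z
        = ∑ p : Fin (n+1) × ({ j // j ≠ i } → Fin (n+1)), F (e p) :=
          (Fintype.sum_equiv e _ _ (fun p => rfl)).symm
      _ = _ := Fintype.sum_prod_type (fun p => F (e p))
  have coord : ∀ x y, (e (x, y)) i = x := by
    intro x y; simp [he, Equiv.funSplitAt, Equiv.piSplitAt]
  have coord' : ∀ x y j (hj : j ≠ i), (e (x, y)) j = y ⟨j, hj⟩ := by
    intro x y j h; simp [he, Equiv.funSplitAt, Equiv.piSplitAt, h]
  have upd : ∀ (x x' : Fin (n+1)) y, Function.update (e (x, y)) i x' = e (x', y) := by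
    intro x x' y
    funext j
    by_cases h : j = i
    · subst h; simp [coord]
    · simp [Function.update, h, coord' _ _ _ h]
  have Hconst : ∀ x y, H (e (x, y)) = H (e (0, y)) := by
    intro x y; rw [← upd x 0 y, hH]
  have Wsplit : ∀ x y, WW q (e (x, y)) = q x * ∏ j ∈ ({i}ᶜ : Finset (Fin k)), q (e (0, y) j) := by
    intro x y
    rw [WW, Fintype.prod_eq_mul_prod_compl i, coord]
    congr 1
    refine Finset.prod_congr rfl (fun j hj => ?_)
    rw [Finset.mem_compl, Finset.mem_singleton] at hj
    rw [coord' _ _ _ hj, coord' _ _ _ hj]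
  have main : ∀ F : Fin (n+1) → ℝ,
      (∑ z : Fin k → Fin (n+1), WW q z * (F (z i) * H z))
        = (∑ x, q x * F x) * ∑ y : { j // j ≠ i } → Fin (n+1),
            (∏ j ∈ ({i}ᶜ : Finset (Fin k)), q (e (0, y) j)) * H (e (0, y)) := by
    intro F
    rw [key]
    rw [Finset.sum_mul]
    refine Finset.sum_congr rfl (fun x _ => ?_)
    rw [Finset.mul_sum]
    refine Finset.sum_congr rfl (fun y _ => ?_)
    rw [Wsplit, coord, Hconst]
    ring
  have rhs := main (fun _ => 1)
  simp only [mul_one, hq1, one_mul] at rhs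
  rw [main G, rhs]






noncomputable def cdfR (q : Fin (n+1) → ℝ) (ℓ : ℕ) : ℝ :=
  ∑ x : Fin (n+1), if (x:ℕ) ≤ ℓ then q x else 0

noncomputable def omg (q : Fin (n+1) → ℝ) (ℓ : ℕ) (x : Fin (n+1)) : ℝ :=
  ((if (x:ℕ) ≤ ℓ then (1:ℝ) else 0) - cdfR q ℓ) / (1 - cdfR q ℓ)

noncomputable def MartM (q : Fin (n+1) → ℝ) (ℓ : ℕ) (z : Fin k → Fin (n+1)) : ℝ :=
  ∑ i, omg q ℓ (z i)

def clampF (ℓ : ℕ) (z : Fin k → Fin (n+1)) : Fin k → Fin (n+1) :=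
  fun i => if (z i : ℕ) ≤ ℓ then z i else Fin.last n

section basic
variable {q : Fin (n+1) → ℝ}

lemma cdfR_mono (hq0 : ∀ x, 0 ≤ q x) {ℓ ℓ' : ℕ} (h : ℓ ≤ ℓ') : cdfR q ℓ ≤ cdfR q ℓ' := by
  refine Finset.sum_le_sum fun x _ => ?_
  by_cases hx : (x:ℕ) ≤ ℓ
  · simp [hx, hx.trans h]
  · by_cases hx' : (x:ℕ) ≤ ℓ' <;> simp [hx, hx', hq0 x]

lemma cdfR_nonneg (hq0 : ∀ x, 0 ≤ q x) (ℓ : ℕ) : 0 ≤ cdfR q ℓ :=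
  Finset.sum_nonneg fun x _ => by by_cases hx : (x:ℕ) ≤ ℓ <;> simp [hx, hq0 x]

lemma cdfR_last (hq1 : ∑ x, q x = 1) {ℓ : ℕ} (h : n ≤ ℓ) : cdfR q ℓ = 1 := by
  rw [← hq1]
  exact Finset.sum_congr rfl fun x _ => by simp [le_trans (Nat.le_of_lt_succ x.isLt) h]

lemma cdfR_lt_one (hq0 : ∀ x, 0 ≤ q x) (hq1 : ∑ x, q x = 1) {ℓ : ℕ}
    (h : cdfR q ℓ ≤ 1/2) : ℓ < n := by
  by_contra hc
  push_neg at hc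
  rw [cdfR_last hq1 hc] at h
  norm_num at h

lemma mean_omg (hq1 : ∑ x, q x = 1) {ℓ : ℕ} (h : cdfR q ℓ ≠ 1) :
    ∑ x, q x * omg q ℓ x = 0 := by
  have key : ∀ x : Fin (n+1), q x * omg q ℓ x
      = ((if (x:ℕ) ≤ ℓ then q x else 0) - q x * cdfR q ℓ) / (1 - cdfR q ℓ) := by
    intro x
    unfold omg
    by_cases hx : (x:ℕ) ≤ ℓ <;> simp [hx] <;> ring
  simp only [key]
  rw [← Finset.sum_div, Finset.sum_sub_distrib, ← Finset.sum_mul, hq1]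
  have hc : (∑ x : Fin (n+1), if (x:ℕ) ≤ ℓ then q x else 0) = cdfR q ℓ := rfl
  rw [hc]
  simp

lemma sq_omg_le_one (hq0 : ∀ x, 0 ≤ q x) {ℓ : ℕ} (h : cdfR q ℓ ≤ 1/2) (x : Fin (n+1)) :
    omg q ℓ x ^ 2 ≤ 1 := by
  have h0 := cdfR_nonneg hq0 ℓ
  have h1 : (0:ℝ) < 1 - cdfR q ℓ := by linarith
  by_cases hx : (x:ℕ) ≤ ℓ
  · simp [omg, hx, div_self h1.ne']
  · have he : omg q ℓ x = -(cdfR q ℓ / (1 - cdfR q ℓ)) := by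
      simp [omg, hx]
      ring
    have h2 : cdfR q ℓ / (1 - cdfR q ℓ) ≤ 1 := (div_le_one h1).mpr (by linarith)
    have h3 : 0 ≤ cdfR q ℓ / (1 - cdfR q ℓ) := div_nonneg h0 h1.le
    rw [he]
    nlinarith

/-- clamping then clamping lower is clamping lower -/
lemma clamp_clamp {ℓ L : ℕ} (h : ℓ ≤ L) (z : Fin k → Fin (n+1)) :
    clampF ℓ (clampF L z) = clampF ℓ z := by
  funext i
  unfold clampF
  by_cases h1 : (z i : ℕ) ≤ L
  · simp [h1]
  · have h2 : ¬ (z i : ℕ) ≤ ℓ := fun hc => h1 (hc.trans h)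
    simp [h1, h2]

lemma omg_clamp {ℓ' ℓ : ℕ} (h : ℓ' ≤ ℓ) (x : Fin (n+1)) :
    omg q ℓ' (if (x:ℕ) ≤ ℓ then x else Fin.last n) = omg q ℓ' x := by
  by_cases h1 : (x:ℕ) ≤ ℓ
  · simp [h1]
  · have h2 : ¬ (x:ℕ) ≤ ℓ' := fun hc => h1 (hc.trans h)
    have h3 : ¬ (n:ℕ) ≤ ℓ' := by
      have := Nat.le_of_lt_succ x.isLt
      omega
    simp [h1, omg, h2, h3]

lemma MartM_clamp {ℓ' ℓ : ℕ} (h : ℓ' ≤ ℓ) (z : Fin k → Fin (n+1)) :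
    MartM q ℓ' (clampF ℓ z) = MartM q ℓ' z :=
  Finset.sum_congr rfl fun i _ => omg_clamp h (z i)

end basic

section kolg
open scoped Classical
variable {q : Fin (n+1) → ℝ}

lemma step_orth (hq1 : ∑ x, q x = 1) {ℓ : ℕ}
    (hℓ : cdfR q ℓ ≠ 1) (hℓ1 : cdfR q (ℓ+1) ≠ 1) (hn : ℓ < n)
    (g : (Fin k → Fin (n+1)) → ℝ) :
    ∑ z : Fin k → Fin (n+1),
      WW q z * (g (clampF ℓ z) * (MartM q (ℓ+1) z - MartM q ℓ z)) = 0 := by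
  set d : Fin (n+1) → ℝ := fun x => omg q (ℓ+1) x - omg q ℓ x with hd
  have hp : (1:ℝ) - cdfR q ℓ ≠ 0 := by
    intro hc; exact hℓ (by linarith [sub_eq_zero.mp hc])
  have hp1 : (1:ℝ) - cdfR q (ℓ+1) ≠ 0 := by
    intro hc; exact hℓ1 (by linarith [sub_eq_zero.mp hc])
  have hd0 : ∀ x : Fin (n+1), (x:ℕ) ≤ ℓ → d x = 0 := by
    intro x hx
    have hx1 : (x:ℕ) ≤ ℓ+1 := hx.trans (Nat.le_succ ℓ)
    simp [hd, omg, hx, hx1, div_self hp, div_self hp1]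
  have hM : ∀ z : Fin k → Fin (n+1), MartM q (ℓ+1) z - MartM q ℓ z = ∑ i, d (z i) :=
    fun z => (Finset.sum_sub_distrib _ _).symm
  have hsplit : ∀ z : Fin k → Fin (n+1),
      WW q z * (g (clampF ℓ z) * (MartM q (ℓ+1) z - MartM q ℓ z))
        = ∑ i, WW q z * (d (z i) * g (clampF ℓ z)) := by
    intro z
    rw [hM, Finset.mul_sum, Finset.mul_sum]
    exact Finset.sum_congr rfl fun i _ => by ring
  simp only [hsplit]
  rw [Finset.sum_comm]
  refine Finset.sum_eq_zero fun i _ => ?_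
  set H : (Fin k → Fin (n+1)) → ℝ := fun z => g (clampF ℓ (Function.update z i (Fin.last n)))
    with hH
  have hHinv : ∀ z x, H (Function.update z i x) = H z := by
    intro z x; simp [hH, Function.update_idem]
  have hpt : ∀ z : Fin k → Fin (n+1), d (z i) * g (clampF ℓ z) = d (z i) * H z := by
    intro z
    by_cases hz : (z i : ℕ) ≤ ℓ
    · rw [hd0 _ hz]; ring
    · congr 2
      funext j
      by_cases hj : j = i
      · subst hj
        have : ¬ ((Fin.last n : Fin (n+1)) : ℕ) ≤ ℓ := by
          simp [Fin.val_last]; omega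
        simp [clampF, hz, Function.update_self, this]
      · simp [clampF, Function.update_of_ne hj]
  simp only [hpt]
  rw [extract q hq1 i d H hHinv]
  have : ∑ x, q x * d x = 0 := by
    have e1 := mean_omg (q := q) hq1 hℓ
    have e2 := mean_omg (q := q) hq1 hℓ1
    have : ∀ x : Fin (n+1), q x * d x = q x * omg q (ℓ+1) x - q x * omg q ℓ x :=
      fun x => by simp [hd]; ring
    simp only [this]
    rw [Finset.sum_sub_distrib, e1, e2, sub_zero]
  rw [this, zero_mul]

lemma telescope (hq1 : ∑ x, q x = 1) {ℓ L : ℕ} (hle : ℓ ≤ L)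
    (hL : ∀ ℓ' ≤ L, cdfR q ℓ' ≠ 1) (g : (Fin k → Fin (n+1)) → ℝ) :
    ∑ z : Fin k → Fin (n+1),
      WW q z * (g (clampF ℓ z) * (MartM q L z - MartM q ℓ z)) = 0 := by
  induction L, hle using Nat.le_induction with
  | base => simp
  | succ L hle ih =>
    have hLn : L < n := by
      by_contra hc
      push_neg at hc
      exact hL (L+1) le_rfl (cdfR_last hq1 (by omega))
    have hsplit : ∀ z : Fin k → Fin (n+1),
        WW q z * (g (clampF ℓ z) * (MartM q (L+1) z - MartM q ℓ z))
          = WW q z * (g (clampF ℓ z) * (MartM q (L+1) z - MartM q L z))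
            + WW q z * (g (clampF ℓ z) * (MartM q L z - MartM q ℓ z)) := fun z => by ring
    simp only [hsplit]
    rw [Finset.sum_add_distrib]
    rw [ih (fun ℓ' h => hL ℓ' (h.trans (Nat.le_succ L))), add_zero]
    have hgc : ∀ z : Fin k → Fin (n+1), g (clampF ℓ z) = (g ∘ clampF ℓ) (clampF L z) :=
      fun z => by simp [Function.comp, clamp_clamp hle]
    simp only [hgc]
    exact step_orth hq1 (hL L (Nat.le_succ L)) (hL (L+1) le_rfl) hLn _

lemma second_moment (hq0 : ∀ x, 0 ≤ q x) (hq1 : ∑ x, q x = 1) {m : ℕ}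
    (hm : cdfR q m ≤ 1/2) :
    ∑ z : Fin k → Fin (n+1), WW q z * (MartM q m z)^2 ≤ k := by
  have hm1 : cdfR q m ≠ 1 := by intro hc; rw [hc] at hm; norm_num at hm
  have expand : ∀ z : Fin k → Fin (n+1),
      WW q z * (MartM q m z)^2 = ∑ i, ∑ j, WW q z * (omg q m (z i) * omg q m (z j)) := by
    intro z
    rw [MartM, sq, Finset.sum_mul_sum]
    rw [Finset.mul_sum]
    refine Finset.sum_congr rfl fun i _ => ?_
    rw [Finset.mul_sum]
  simp only [expand]
  rw [Finset.sum_comm]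
  have inner : ∀ i : Fin k, ∑ z : Fin k → Fin (n+1), ∑ j,
      WW q z * (omg q m (z i) * omg q m (z j)) ≤ 1 := by
    intro i
    rw [Finset.sum_comm]
    have hterm : ∀ j : Fin k, j ≠ i →
        ∑ z : Fin k → Fin (n+1), WW q z * (omg q m (z i) * omg q m (z j)) = 0 := by
      intro j hj
      have := extract q hq1 i (omg q m) (fun z => omg q m (z j))
        (fun z x => by simp [Function.update_of_ne hj])
      rw [this, mean_omg hq1 hm1, zero_mul]
    have hdiag : ∑ z : Fin k → Fin (n+1), WW q z * (omg q m (z i) * omg q m (z i)) ≤ 1 := by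
      have := extract q hq1 i (fun x => omg q m x * omg q m x) (fun _ => 1)
        (fun z x => rfl)
      simp only [mul_one] at this
      rw [this, sum_WW q hq1, mul_one]
      calc ∑ x, q x * (omg q m x * omg q m x) ≤ ∑ x, q x := by
            refine Finset.sum_le_sum fun x _ => ?_
            have := sq_omg_le_one hq0 hm x
            rw [sq] at this
            exact mul_le_of_le_one_right (hq0 x) this
        _ = 1 := hq1
    calc ∑ j, ∑ z : Fin k → Fin (n+1), WW q z * (omg q m (z i) * omg q m (z j))
        = ∑ z : Fin k → Fin (n+1), WW q z * (omg q m (z i) * omg q m (z i)) := by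
          refine Finset.sum_eq_single_of_mem i (Finset.mem_univ i) fun j _ hj => hterm j hj
      _ ≤ 1 := hdiag
  calc ∑ i : Fin k, ∑ z : Fin k → Fin (n+1), ∑ j, WW q z * (omg q m (z i) * omg q m (z j))
      ≤ ∑ _i : Fin k, (1:ℝ) := Finset.sum_le_sum fun i _ => inner i
    _ = k := by simp

lemma WW_nonneg (hq0 : ∀ x, 0 ≤ q x) (z : Fin k → Fin (n+1)) : 0 ≤ WW q z :=
  Finset.prod_nonneg fun i _ => hq0 (z i)

lemma kolmogorov (hq0 : ∀ x, 0 ≤ q x) (hq1 : ∑ x, q x = 1) {m : ℕ}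
    (hm : cdfR q m ≤ 1/2) {a : ℝ} (ha : 0 < a) :
    a^2 * ∑ z ∈ Finset.univ.filter
        (fun z : Fin k → Fin (n+1) => ∃ ℓ ≤ m, a < |MartM q ℓ z|), WW q z ≤ k := by
  classical
  have hm1 : ∀ ℓ' ≤ m, cdfR q ℓ' ≠ 1 := by
    intro ℓ' h hc
    have := cdfR_mono hq0 h
    rw [hc] at this
    linarith
  set P : ℕ → (Fin k → Fin (n+1)) → Prop := fun ℓ z => a < |MartM q ℓ z| with hP
  set A : ℕ → Finset (Fin k → Fin (n+1)) :=
    fun ℓ => Finset.univ.filter (fun z => P ℓ z ∧ ∀ ℓ' < ℓ, ¬ P ℓ' z) with hA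
  have key : ∀ {ℓ₁ ℓ₂ : ℕ}, ℓ₁ < ℓ₂ → Disjoint (A ℓ₁) (A ℓ₂) := by
    intro ℓ₁ ℓ₂ h
    rw [Finset.disjoint_left]
    intro z h1 h2
    simp only [hA, Finset.mem_filter] at h1 h2
    exact h2.2.2 ℓ₁ h h1.2.1
  have hdisj : (↑(Finset.range (m+1)) : Set ℕ).PairwiseDisjoint A :=
    fun ℓ₁ _ ℓ₂ _ hne => (Ne.lt_or_gt hne).elim (fun h => key h) (fun h => (key h).symm)
  have hsub : Finset.univ.filter (fun z : Fin k → Fin (n+1) => ∃ ℓ ≤ m, P ℓ z)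
      = (Finset.range (m+1)).biUnion A := by
    ext z
    simp only [Finset.mem_filter, Finset.mem_biUnion, Finset.mem_range, Finset.mem_univ,
      true_and, hA]
    constructor
    · rintro ⟨ℓ, hℓ, hp⟩
      have hex : ∃ ℓ, P ℓ z := ⟨ℓ, hp⟩
      refine ⟨Nat.find hex, ?_, Nat.find_spec hex, fun ℓ' h' => Nat.find_min hex h'⟩
      have := Nat.find_min' hex hp
      omega
    · rintro ⟨ℓ, hℓ, hp, _⟩
      exact ⟨ℓ, by omega, hp⟩
  have per : ∀ ℓ ≤ m, a^2 * ∑ z ∈ A ℓ, WW q z ≤ ∑ z ∈ A ℓ, WW q z * (MartM q m z)^2 := by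
    intro ℓ hℓ
    set g : (Fin k → Fin (n+1)) → ℝ :=
      fun z => if P ℓ z ∧ ∀ ℓ' < ℓ, ¬ P ℓ' z then MartM q ℓ z else 0 with hg
    have hcond : ∀ w : Fin k → Fin (n+1), P ℓ (clampF ℓ w) ↔ P ℓ w := fun w => by
      simp only [hP]
      rw [MartM_clamp le_rfl]
    have hcond' : ∀ (ℓ' : ℕ), ℓ' < ℓ → ∀ w : Fin k → Fin (n+1),
        (P ℓ' (clampF ℓ w) ↔ P ℓ' w) := fun ℓ' h w => by
      simp only [hP]
      rw [MartM_clamp h.le]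
    have hgc : ∀ w : Fin k → Fin (n+1), g (clampF ℓ w) = g w := by
      intro w
      simp only [hg]
      by_cases h : P ℓ w ∧ ∀ ℓ' < ℓ, ¬ P ℓ' w
      · rw [if_pos, if_pos h, MartM_clamp le_rfl]
        exact ⟨(hcond w).mpr h.1, fun ℓ' hl hp => h.2 ℓ' hl ((hcond' ℓ' hl w).mp hp)⟩
      · rw [if_neg, if_neg h]
        intro hc
        exact h ⟨(hcond w).mp hc.1, fun ℓ' hl hp => hc.2 ℓ' hl ((hcond' ℓ' hl w).mpr hp)⟩
    have orth : ∑ z ∈ A ℓ, WW q z * (MartM q ℓ z * (MartM q m z - MartM q ℓ z)) = 0 := by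
      have e1 : ∑ z ∈ A ℓ, WW q z * (MartM q ℓ z * (MartM q m z - MartM q ℓ z))
          = ∑ z : Fin k → Fin (n+1), WW q z * (g (clampF ℓ z) * (MartM q m z - MartM q ℓ z)) := by
        rw [hA, Finset.sum_filter]
        refine Finset.sum_congr rfl fun z _ => ?_
        rw [hgc z]
        by_cases h : P ℓ z ∧ ∀ ℓ' < ℓ, ¬ P ℓ' z
        · rw [if_pos h, hg]
          simp only [if_pos h]
        · rw [if_neg h, hg]
          simp only [if_neg h]
          ring
      rw [e1]
      exact telescope hq1 hℓ hm1 g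
    have pointwise : ∀ z ∈ A ℓ, a^2 * WW q z ≤ WW q z * (MartM q ℓ z)^2 := by
      intro z hz
      simp only [hA, Finset.mem_filter, hP] at hz
      have h1 : a^2 ≤ (MartM q ℓ z)^2 := by
        have h2 := hz.2.1
        have h3 := abs_nonneg (MartM q ℓ z)
        nlinarith [sq_abs (MartM q ℓ z)]
      have h4 := WW_nonneg hq0 z
      nlinarith
    have h1 : ∑ z ∈ A ℓ, WW q z * (MartM q m z)^2
        = ∑ z ∈ A ℓ, WW q z * (MartM q ℓ z)^2
          + 2 * ∑ z ∈ A ℓ, WW q z * (MartM q ℓ z * (MartM q m z - MartM q ℓ z))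
          + ∑ z ∈ A ℓ, WW q z * (MartM q m z - MartM q ℓ z)^2 := by
      rw [Finset.mul_sum, ← Finset.sum_add_distrib, ← Finset.sum_add_distrib]
      exact Finset.sum_congr rfl fun z _ => by ring
    have h2 : 0 ≤ ∑ z ∈ A ℓ, WW q z * (MartM q m z - MartM q ℓ z)^2 :=
      Finset.sum_nonneg fun z _ => mul_nonneg (WW_nonneg hq0 z) (sq_nonneg _)
    calc a^2 * ∑ z ∈ A ℓ, WW q z = ∑ z ∈ A ℓ, a^2 * WW q z := Finset.mul_sum _ _ _
      _ ≤ ∑ z ∈ A ℓ, WW q z * (MartM q ℓ z)^2 := Finset.sum_le_sum pointwise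
      _ ≤ ∑ z ∈ A ℓ, WW q z * (MartM q m z)^2 := by rw [h1, orth, mul_zero, add_zero]; linarith
  rw [hsub, Finset.sum_biUnion hdisj, Finset.mul_sum]
  calc ∑ ℓ ∈ Finset.range (m+1), a^2 * ∑ z ∈ A ℓ, WW q z
      ≤ ∑ ℓ ∈ Finset.range (m+1), ∑ z ∈ A ℓ, WW q z * (MartM q m z)^2 :=
        Finset.sum_le_sum fun ℓ hℓ => per ℓ (by simpa [Nat.lt_succ_iff] using hℓ)
    _ = ∑ z ∈ (Finset.range (m+1)).biUnion A, WW q z * (MartM q m z)^2 :=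
        (Finset.sum_biUnion hdisj).symm
    _ ≤ ∑ z : Fin k → Fin (n+1), WW q z * (MartM q m z)^2 :=
        Finset.sum_le_sum_of_subset_of_nonneg (Finset.subset_univ _)
          (fun z _ _ => mul_nonneg (WW_nonneg hq0 z) (sq_nonneg _))
    _ ≤ k := second_moment hq0 hq1 hm

lemma fwd (hq0 : ∀ x, 0 ≤ q x) (hq1 : ∑ x, q x = 1) {m : ℕ} (hm : cdfR q m ≤ 1/2)
    {ε : ℝ} (hε : 0 < ε) (hk : 0 < k) :
    ∑ z ∈ Finset.univ.filter
      (fun z : Fin k → Fin (n+1) => ∃ ℓ ≤ m, ε < |empCDF z ℓ - cdfR q ℓ|), WW q z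
    ≤ 1 / (k * ε^2) := by
  have hkR : (0:ℝ) < k := by exact_mod_cast hk
  have ha : (0:ℝ) < k * ε := by positivity
  have hid : ∀ (ℓ : ℕ), ℓ ≤ m → ∀ z : Fin k → Fin (n+1),
      (1 - cdfR q ℓ) * MartM q ℓ z = k * (empCDF z ℓ - cdfR q ℓ) := by
    intro ℓ hℓ z
    have hp : (1:ℝ) - cdfR q ℓ ≠ 0 := by
      have h1 := cdfR_mono hq0 hℓ
      intro hc
      have h2 : cdfR q ℓ = 1 := by linarith [sub_eq_zero.mp hc]
      rw [h2] at h1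
      linarith
    have h1 : (1 - cdfR q ℓ) * MartM q ℓ z
        = ∑ i : Fin k, ((if (z i : ℕ) ≤ ℓ then (1:ℝ) else 0) - cdfR q ℓ) := by
      rw [MartM, Finset.mul_sum]
      refine Finset.sum_congr rfl fun i _ => ?_
      rw [omg, mul_div_cancel₀ _ hp]
    rw [h1, Finset.sum_sub_distrib, Finset.sum_boole, Finset.sum_const, nsmul_eq_mul]
    rw [empCDF]
    field_simp
    simp only [Finset.card_univ, Fintype.card_fin]
    ring
  have hsubset : Finset.univ.filter
        (fun z : Fin k → Fin (n+1) => ∃ ℓ ≤ m, ε < |empCDF z ℓ - cdfR q ℓ|)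
      ⊆ Finset.univ.filter
        (fun z : Fin k → Fin (n+1) => ∃ ℓ ≤ m, (k:ℝ) * ε < |MartM q ℓ z|) := by
    intro z hz
    simp only [Finset.mem_filter, Finset.mem_univ, true_and] at hz ⊢
    obtain ⟨ℓ, hℓ, hd⟩ := hz
    refine ⟨ℓ, hℓ, ?_⟩
    have h0 := cdfR_nonneg hq0 ℓ
    have hple : cdfR q ℓ ≤ 1/2 := le_trans (cdfR_mono hq0 hℓ) hm
    have h2 : (k:ℝ) * ε < k * |empCDF z ℓ - cdfR q ℓ| := by
      exact (mul_lt_mul_iff_right₀ hkR).mpr hd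
    have h3 : (k:ℝ) * |empCDF z ℓ - cdfR q ℓ| = (1 - cdfR q ℓ) * |MartM q ℓ z| := by
      rw [← abs_of_pos (by linarith : (0:ℝ) < 1 - cdfR q ℓ), ← abs_mul, hid ℓ hℓ z, abs_mul,
        abs_of_pos hkR]
    have h4 : (1 - cdfR q ℓ) * |MartM q ℓ z| ≤ |MartM q ℓ z| := by
      nlinarith [abs_nonneg (MartM q ℓ z)]
    linarith
  have hbound := kolmogorov (k := k) hq0 hq1 hm ha
  have hsum := Finset.sum_le_sum_of_subset_of_nonneg hsubset
    (fun z _ _ => WW_nonneg hq0 z)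
  have ha2 : (0:ℝ) < (k * ε)^2 := by positivity
  have heq : (1:ℝ)/(k * ε^2) = k / ((k:ℝ)*ε)^2 := by
    field_simp
  rw [heq, le_div_iff₀ ha2]
  nlinarith

lemma rev_cast (x : Fin (n+1)) : ((x.rev : Fin (n+1)) : ℕ) = n - (x : ℕ) := by
  rw [Fin.val_rev]
  omega

lemma cdfR_rev (hq1 : ∑ x, q x = 1) {L : ℕ} (hL : L < n) :
    cdfR (fun x : Fin (n+1) => q x.rev) (n - 1 - L) = 1 - cdfR q L := by
  have h1 : cdfR (fun x : Fin (n+1) => q x.rev) (n-1-L)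
      = ∑ y : Fin (n+1), if ¬ ((y:ℕ) ≤ L) then q y else 0 := by
    rw [cdfR]
    refine Fintype.sum_equiv Fin.revPerm _ _ fun x => ?_
    have hx := Nat.le_of_lt_succ x.isLt
    have hcond : ((x:ℕ) ≤ n - 1 - L) ↔ ¬ ((Fin.revPerm x : Fin (n+1)) : ℕ) ≤ L := by
      simp only [Fin.revPerm_apply, rev_cast]
      omega
    by_cases hc : (x:ℕ) ≤ n - 1 - L
    · rw [if_pos hc, if_pos (hcond.mp hc)]
      rfl
    · rw [if_neg hc, if_neg (fun h => hc (hcond.mpr h))]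
  rw [h1, eq_sub_iff_add_eq, ← hq1, cdfR, ← Finset.sum_add_distrib]
  refine Finset.sum_congr rfl fun y _ => ?_
  by_cases hy : (y:ℕ) ≤ L <;> simp [hy]

lemma empCDF_rev (hk : 0 < k) {L : ℕ} (hL : L < n) (z : Fin k → Fin (n+1)) :
    empCDF (fun i => (z i).rev) (n - 1 - L) = 1 - empCDF z L := by
  have hkR : (0:ℝ) < k := by exact_mod_cast hk
  rw [empCDF, empCDF]
  have hco : (Finset.univ.filter (fun i : Fin k => (((z i).rev : Fin (n+1)) : ℕ) ≤ n - 1 - L))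
      = Finset.univ.filter (fun i : Fin k => ¬ ((z i : ℕ) ≤ L)) := by
    refine Finset.filter_congr fun i _ => ?_
    have hx := Nat.le_of_lt_succ (z i).isLt
    rw [rev_cast]
    constructor <;> intro h <;> omega
  rw [hco, Finset.filter_not, Finset.card_sdiff_of_subset (Finset.filter_subset _ _)]
  rw [Nat.cast_sub (Finset.card_le_card (Finset.filter_subset _ _))]
  simp only [Finset.card_univ, Fintype.card_fin]
  field_simp

lemma bwd (hq0 : ∀ x, 0 ≤ q x) (hq1 : ∑ x, q x = 1) {m : ℕ} (hm : 1/2 ≤ cdfR q m)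
    {ε : ℝ} (hε : 0 < ε) (hk : 0 < k) :
    ∑ z ∈ Finset.univ.filter
      (fun z : Fin k → Fin (n+1) => ∃ ℓ, m ≤ ℓ ∧ ℓ < n ∧ ε < |empCDF z ℓ - cdfR q ℓ|), WW q z
    ≤ 1 / (k * ε^2) := by
  by_cases hmn : m < n
  case neg =>
    have : Finset.univ.filter
        (fun z : Fin k → Fin (n+1) => ∃ ℓ, m ≤ ℓ ∧ ℓ < n ∧ ε < |empCDF z ℓ - cdfR q ℓ|) = ∅ := by
      refine Finset.filter_false_of_mem fun z _ => ?_
      rintro ⟨ℓ, h1, h2, _⟩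
      omega
    rw [this]
    simp
    positivity
  case pos =>
    set q' : Fin (n+1) → ℝ := fun x => q x.rev with hq'
    have hq0' : ∀ x, 0 ≤ q' x := fun x => hq0 _
    have hq1' : ∑ x, q' x = 1 := by
      rw [← hq1]
      exact Fintype.sum_equiv Fin.revPerm _ _ fun x => rfl
    have hm' : cdfR q' (n - 1 - m) ≤ 1/2 := by
      rw [cdfR_rev hq1 hmn]
      linarith
    have hfwd := fwd (k := k) hq0' hq1' hm' hε hk
    refine le_trans (le_of_eq ?_) hfwd
    set E : (Fin k → Fin (n+1)) ≃ (Fin k → Fin (n+1)) :=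
      Function.Involutive.toPerm (fun z => fun i => (z i).rev)
        (fun z => by funext i; simp [Fin.rev_rev]) with hE
    rw [Finset.sum_filter, Finset.sum_filter]
    refine Fintype.sum_equiv E _ _ fun z => ?_
    have hEz : E z = fun i => (z i).rev := rfl
    have hW : WW q' (E z) = WW q z := by
      rw [hEz, WW, WW]
      exact Finset.prod_congr rfl fun i _ => by simp [hq', Fin.rev_rev]
    have hiff : (∃ ℓ, m ≤ ℓ ∧ ℓ < n ∧ ε < |empCDF z ℓ - cdfR q ℓ|)
        ↔ (∃ ℓ' ≤ n - 1 - m, ε < |empCDF (E z) ℓ' - cdfR q' ℓ'|) := by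
      constructor
      · rintro ⟨ℓ, h1, h2, h3⟩
        refine ⟨n - 1 - ℓ, by omega, ?_⟩
        rw [hEz, empCDF_rev hk h2, cdfR_rev hq1 h2]
        rw [show (1 - empCDF z ℓ) - (1 - cdfR q ℓ) = -(empCDF z ℓ - cdfR q ℓ) by ring, abs_neg]
        exact h3
      · rintro ⟨ℓ', h1, h2⟩
        refine ⟨n - 1 - ℓ', by omega, by omega, ?_⟩
        have hL : n - 1 - ℓ' < n := by omega
        have hℓ' : n - 1 - (n - 1 - ℓ') = ℓ' := by omega
        rw [hEz, ← hℓ'] at h2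
        rw [empCDF_rev hk hL, cdfR_rev hq1 hL] at h2
        rw [show (1 - empCDF z (n-1-ℓ')) - (1 - cdfR q (n-1-ℓ')) = -(empCDF z (n-1-ℓ') - cdfR q (n-1-ℓ')) by ring, abs_neg] at h2
        exact h2
    by_cases hz : ∃ ℓ, m ≤ ℓ ∧ ℓ < n ∧ ε < |empCDF z ℓ - cdfR q ℓ|
    · rw [if_pos hz, if_pos (hiff.mp hz), hW]
    · rw [if_neg hz, if_neg (fun h => hz (hiff.mpr h))]

lemma empCDF_n (hk : 0 < k) (z : Fin k → Fin (n+1)) : empCDF z n = 1 := by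
  have : Finset.univ.filter (fun i : Fin k => (z i : ℕ) ≤ n) = Finset.univ :=
    Finset.filter_true_of_mem fun i _ => Nat.le_of_lt_succ (z i).isLt
  rw [empCDF, this]
  simp only [Finset.card_univ, Fintype.card_fin]
  field_simp

lemma total (hq0 : ∀ x, 0 ≤ q x) (hq1 : ∑ x, q x = 1) {ε δ : ℝ}
    (hε : 0 < ε) (hδ : 0 < δ) (hk4 : 4 / (δ * ε ^ 2) ≤ (k : ℝ)) :
    ∑ z ∈ Finset.univ.filter
      (fun z : Fin k → Fin (n+1) => ∃ ℓ ≤ n, ε < |empCDF z ℓ - cdfR q ℓ|), WW q z ≤ δ := by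
  classical
  have hkR : (0:ℝ) < k := lt_of_lt_of_le (by positivity) hk4
  have hk : 0 < k := by exact_mod_cast hkR
  have hquarter : 1 / ((k:ℝ) * ε^2) ≤ δ/4 := by
    rw [div_le_div_iff₀ (by positivity) (by norm_num)]
    have h4 : 4 ≤ (k:ℝ) * (δ * ε^2) := (div_le_iff₀ (by positivity)).mp hk4
    nlinarith
  have hWnn : ∀ z : Fin k → Fin (n+1), 0 ≤ WW q z := WW_nonneg hq0
  by_cases hc0 : cdfR q 0 ≤ 1/2
  case neg =>
    push_neg at hc0
    have hsub : Finset.univ.filter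
        (fun z : Fin k → Fin (n+1) => ∃ ℓ ≤ n, ε < |empCDF z ℓ - cdfR q ℓ|)
        ⊆ Finset.univ.filter
          (fun z : Fin k → Fin (n+1) => ∃ ℓ, 0 ≤ ℓ ∧ ℓ < n ∧ ε < |empCDF z ℓ - cdfR q ℓ|) := by
      intro z hz
      simp only [Finset.mem_filter, Finset.mem_univ, true_and] at hz ⊢
      obtain ⟨ℓ, h1, h2⟩ := hz
      refine ⟨ℓ, Nat.zero_le ℓ, ?_, h2⟩
      rcases Nat.lt_or_ge ℓ n with h | h
      · exact h
      · exfalso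
        have hn : ℓ = n := le_antisymm h1 h
        rw [hn, empCDF_n hk z, cdfR_last hq1 le_rfl] at h2
        simp at h2
        linarith
    calc ∑ z ∈ _, WW q z ≤ _ := Finset.sum_le_sum_of_subset_of_nonneg hsub fun z _ _ => hWnn z
      _ ≤ 1 / ((k:ℝ) * ε^2) := bwd hq0 hq1 hc0.le hε hk
      _ ≤ δ := by linarith
  case pos =>
    set m := Nat.findGreatest (fun ℓ => cdfR q ℓ ≤ 1/2) n with hmdef
    have hPm : cdfR q m ≤ 1/2 := by
      have := Nat.findGreatest_spec (P := fun ℓ => cdfR q ℓ ≤ 1/2) (m := 0) (Nat.zero_le n) hc0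
      simpa [hmdef] using this
    have hmn : m < n := cdfR_lt_one hq0 hq1 hPm
    have hPm1 : 1/2 ≤ cdfR q (m+1) := by
      by_contra hcon
      push_neg at hcon
      have := Nat.le_findGreatest (P := fun ℓ => cdfR q ℓ ≤ 1/2) (by omega : m+1 ≤ n) hcon.le
      omega
    have hsub : Finset.univ.filter
        (fun z : Fin k → Fin (n+1) => ∃ ℓ ≤ n, ε < |empCDF z ℓ - cdfR q ℓ|)
        ⊆ Finset.univ.filter
            (fun z : Fin k → Fin (n+1) => ∃ ℓ ≤ m, ε < |empCDF z ℓ - cdfR q ℓ|)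
          ∪ Finset.univ.filter
            (fun z : Fin k → Fin (n+1) => ∃ ℓ, m+1 ≤ ℓ ∧ ℓ < n ∧ ε < |empCDF z ℓ - cdfR q ℓ|) := by
      intro z hz
      simp only [Finset.mem_union, Finset.mem_filter, Finset.mem_univ, true_and] at hz ⊢
      obtain ⟨ℓ, h1, h2⟩ := hz
      have hℓn : ℓ < n := by
        rcases Nat.lt_or_ge ℓ n with h | h
        · exact h
        · exfalso
          have hn : ℓ = n := le_antisymm h1 h
          rw [hn, empCDF_n hk z, cdfR_last hq1 le_rfl] at h2
          simp at h2
          linarith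
      rcases le_or_gt ℓ m with h | h
      · exact Or.inl ⟨ℓ, h, h2⟩
      · exact Or.inr ⟨ℓ, h, hℓn, h2⟩
    have hunion := Finset.sum_union_inter (s₁ := Finset.univ.filter
            (fun z : Fin k → Fin (n+1) => ∃ ℓ ≤ m, ε < |empCDF z ℓ - cdfR q ℓ|))
          (s₂ := Finset.univ.filter
            (fun z : Fin k → Fin (n+1) => ∃ ℓ, m+1 ≤ ℓ ∧ ℓ < n ∧ ε < |empCDF z ℓ - cdfR q ℓ|))
          (f := WW q)
    have hinter : (0:ℝ) ≤ ∑ z ∈ (Finset.univ.filter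
            (fun z : Fin k → Fin (n+1) => ∃ ℓ ≤ m, ε < |empCDF z ℓ - cdfR q ℓ|))
          ∩ (Finset.univ.filter
            (fun z : Fin k → Fin (n+1) => ∃ ℓ, m+1 ≤ ℓ ∧ ℓ < n ∧ ε < |empCDF z ℓ - cdfR q ℓ|)),
          WW q z := Finset.sum_nonneg fun z _ => hWnn z
    have hf := fwd (k := k) hq0 hq1 hPm hε hk
    have hb := bwd (k := k) hq0 hq1 hPm1 hε hk
    calc ∑ z ∈ _, WW q z ≤ _ := Finset.sum_le_sum_of_subset_of_nonneg hsub fun z _ _ => hWnn z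
      _ ≤ δ := by linarith

end kolg


open MeasureTheory

lemma meas_eq_sum {α : Type*} [Fintype α] [MeasurableSpace α] [MeasurableSingletonClass α]
    (μ : Measure α) (s : Set α) [DecidablePred (· ∈ s)] :
    μ s = ∑ x ∈ Finset.univ.filter (fun x => x ∈ s), μ {x} := by
  have hs : s = ⋃ x ∈ (Finset.univ.filter (fun x => x ∈ s) : Finset α), ({x} : Set α) := by
    ext y
    simp
  conv_lhs => rw [hs]
  rw [measure_biUnion_finset ?hd ?hm]
  case hd =>
    intro x _ y _ hxy
    simpa using Set.disjoint_singleton.mpr hxy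
  case hm => exact fun x _ => measurableSet_singleton x

instance : MeasurableSingletonClass (Fin k → Fin (n+1)) where
  measurableSet_singleton z := by
    rw [← Set.univ_pi_singleton]
    exact MeasurableSet.univ_pi fun i => measurableSet_singleton (z i)

lemma pi_set_eq (μ : Measure (Fin (n+1))) [IsProbabilityMeasure μ]
    (p : (Fin k → Fin (n+1)) → Prop) [DecidablePred p] :
    Measure.pi (fun _ : Fin k => μ) {z | p z}
      = ENNReal.ofReal (∑ z ∈ Finset.univ.filter p,
          WW (fun x => (μ {x}).toReal) z) := by
  classical
  rw [meas_eq_sum]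
  rw [ENNReal.ofReal_sum_of_nonneg (fun z _ => WW_nonneg (fun x => ENNReal.toReal_nonneg) z)]
  have hfilter : (Finset.univ.filter (fun z : Fin k → Fin (n+1) => z ∈ {z | p z}))
      = Finset.univ.filter p := by
    ext z
    simp
  rw [hfilter]
  refine Finset.sum_congr rfl fun z _ => ?_
  rw [← Set.univ_pi_singleton, Measure.pi_pi, WW]
  rw [← ENNReal.ofReal_toReal (a := ∏ i, μ {z i})
    (ENNReal.prod_ne_top fun i _ => measure_ne_top μ _)]
  congr 1
  rw [ENNReal.toReal_prod]


/-- Weak DKW inequality: with `k = 4/(δ·ε²)` i.i.d. samples from a random variable on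
`{0,...,n}`, with probability at least `1 − δ` the empirical cdf is uniformly within `ε`
of the true cdf. -/
theorem stmt10 {n k : ℕ} (μ : Measure (Fin (n + 1))) [IsProbabilityMeasure μ]
    (ε δ : ℝ) (hε : 0 < ε) (hδ : 0 < δ) (hk : 4 / (δ * ε ^ 2) ≤ (k : ℝ)) :
    ENNReal.ofReal (1 - δ) ≤
      (Measure.pi fun _ : Fin k => μ)
        {z | ∀ ℓ ≤ n, |empCDF z ℓ - (μ {j : Fin (n + 1) | (j : ℕ) ≤ ℓ}).toReal| ≤ ε} := by
  classical
  set q : Fin (n+1) → ℝ := fun x => (μ {x}).toReal with hqdef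
  have hq0 : ∀ x, 0 ≤ q x := fun x => ENNReal.toReal_nonneg
  have hq1 : ∑ x, q x = 1 := by
    have h1 := meas_eq_sum μ Set.univ
    rw [measure_univ] at h1
    have h3 : (Finset.univ.filter (fun x : Fin (n+1) => x ∈ (Set.univ : Set (Fin (n+1)))))
        = Finset.univ := by simp
    rw [h3] at h1
    have h4 := congrArg ENNReal.toReal h1
    rw [ENNReal.toReal_one, ENNReal.toReal_sum (fun x _ => measure_ne_top μ _)] at h4
    exact h4.symm
  have hcdf : ∀ ℓ : ℕ, (μ {j : Fin (n+1) | (j:ℕ) ≤ ℓ}).toReal = cdfR q ℓ := by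
    intro ℓ
    rw [meas_eq_sum μ {j : Fin (n+1) | (j:ℕ) ≤ ℓ},
      ENNReal.toReal_sum (fun x _ => measure_ne_top μ _), cdfR, ← Finset.sum_filter]
    refine Finset.sum_congr ?_ fun x _ => rfl
    ext x
    simp
  set Pr := Measure.pi (fun _ : Fin k => μ) with hPrd
  by_cases hδ1 : 1 ≤ δ
  · have h0 : ENNReal.ofReal (1-δ) = 0 := by
      rw [ENNReal.ofReal_eq_zero]
      linarith
    rw [h0]
    exact zero_le
  · push_neg at hδ1
    set E : Set (Fin k → Fin (n+1)) :=
      {z | ∀ ℓ ≤ n, |empCDF z ℓ - (μ {j : Fin (n + 1) | (j : ℕ) ≤ ℓ}).toReal| ≤ ε} with hE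
    have hEc : Pr Eᶜ ≤ ENNReal.ofReal δ := by
      have hc : Eᶜ = {z | ∃ ℓ ≤ n, ε < |empCDF z ℓ - cdfR q ℓ|} := by
        ext z
        simp only [hE, Set.mem_compl_iff, Set.mem_setOf_eq, hcdf]
        push_neg
        rfl
      rw [hc, hPrd, pi_set_eq μ (fun z => ∃ ℓ ≤ n, ε < |empCDF z ℓ - cdfR q ℓ|)]
      exact ENNReal.ofReal_le_ofReal (total hq0 hq1 hε hδ hk)
    have h1 : (1:ENNReal) ≤ Pr E + Pr Eᶜ := by
      calc (1:ENNReal) = Pr Set.univ := (measure_univ).symm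
        _ = Pr (E ∪ Eᶜ) := by rw [Set.union_compl_self]
        _ ≤ Pr E + Pr Eᶜ := measure_union_le _ _
    have h2 : (1:ENNReal) ≤ Pr E + ENNReal.ofReal δ := h1.trans (add_le_add le_rfl hEc)
    have h3 : ENNReal.ofReal (1-δ) + ENNReal.ofReal δ = 1 := by
      rw [← ENNReal.ofReal_add (by linarith) hδ.le]
      norm_num
    exact (ENNReal.add_le_add_iff_right ENNReal.ofReal_ne_top).mp (by rw [h3]; exact h2)
end

section
/- Fix a random variable X on {0,...,n} and for ℓ = 0,...,n define Λ_ℓ = F̂_X(ℓ) − F_X(ℓ) where F̂_X is the empirical cdf from k i.i.d. samples. Then for ℓ ≥ 1 with F_X(ℓ−1) < 1, E[Λ_ℓ | Λ_{ℓ−1} = m/k − F_X(ℓ−1)] = ((1 − F_X(ℓ)) / (1 − F_X(ℓ−1))) · Λ_{ℓ−1}; equivalently, the sequence Ω*_ℓ = Λ_ℓ/(1 − F_X(ℓ)) is a martingale in ℓ. -/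
open MeasureTheory Finset

variable {α : Type*} [Fintype α] [DecidableEq α]

lemma slice_eq_piFinset {k : ℕ} (A : Finset α) (σ : Finset (Fin k)) :
    univ.filter (fun z : Fin k → α => univ.filter (fun i => z i ∈ A) = σ)
      = Fintype.piFinset (fun i => if i ∈ σ then A else Aᶜ) := by
  ext z
  simp only [mem_filter, mem_univ, true_and, Fintype.mem_piFinset, Finset.ext_iff,
    mem_filter, mem_univ, true_and]
  constructor
  · intro h i
    by_cases hi : i ∈ σ
    · simp [hi, (h i).mpr hi]
    · simp only [hi, if_false, Finset.mem_compl]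
      exact fun hz => hi ((h i).mp hz)
  · intro h i
    specialize h i
    by_cases hi : i ∈ σ
    · simp only [hi, if_true] at h; simp [hi, h]
    · simp only [hi, if_false, Finset.mem_compl] at h; simp [hi, h]

lemma slice_sum {k : ℕ} (w : α → ℝ) (A : Finset α) (σ : Finset (Fin k)) :
    ∑ z ∈ univ.filter (fun z : Fin k → α => univ.filter (fun i => z i ∈ A) = σ),
        ∏ i, w (z i)
      = (∑ x ∈ A, w x) ^ σ.card * (∑ x ∈ Aᶜ, w x) ^ (k - σ.card) := by
  rw [slice_eq_piFinset, ← Finset.prod_univ_sum]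
  have : ∀ i : Fin k, (∑ j ∈ (if i ∈ σ then A else Aᶜ), w j)
      = if i ∈ σ then (∑ x ∈ A, w x) else (∑ x ∈ Aᶜ, w x) := by
    intro i; by_cases hi : i ∈ σ <;> simp [hi]
  rw [Finset.prod_congr rfl (fun i _ => this i), Finset.prod_ite, Finset.prod_const,
    Finset.prod_const, Finset.filter_univ_mem]
  congr 2
  rw [show (univ.filter fun x : Fin k => x ∉ σ) = σᶜ from by ext; simp,
    Finset.card_compl, Fintype.card_fin]

lemma slice_sum_ind {k : ℕ} (w : α → ℝ) (A C : Finset α) (hC : C ⊆ Aᶜ)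
    (σ : Finset (Fin k)) (i' : Fin k) :
    ∑ z ∈ univ.filter (fun z : Fin k → α => univ.filter (fun i => z i ∈ A) = σ),
        (∏ i, w (z i)) * (if z i' ∈ C then (1:ℝ) else 0)
      = if i' ∈ σ then 0 else
          (∑ x ∈ C, w x) * ((∑ x ∈ A, w x) ^ σ.card * (∑ x ∈ Aᶜ, w x) ^ (k - σ.card - 1)) := by
  classical
  rw [slice_eq_piFinset]
  set g : Fin k → α → ℝ := fun i j => if i = i' then (if j ∈ C then w j else 0) else w j with hg
  have hsummand : ∀ z : Fin k → α,
      (∏ i, w (z i)) * (if z i' ∈ C then (1:ℝ) else 0) = ∏ i, g i (z i) := by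
    intro z
    rw [← Finset.prod_erase_mul univ _ (mem_univ i'),
      ← Finset.prod_erase_mul univ (fun i => g i (z i)) (mem_univ i')]
    have h1 : ∏ i ∈ univ.erase i', g i (z i) = ∏ i ∈ univ.erase i', w (z i) :=
      Finset.prod_congr rfl fun i hi => by simp [hg, (Finset.mem_erase.mp hi).1]
    rw [h1]
    simp only [hg, if_pos rfl]
    split <;> ring
  rw [Finset.sum_congr rfl (fun z _ => hsummand z), ← Finset.prod_univ_sum,
    ← Finset.prod_erase_mul univ _ (mem_univ i')]
  have h2 : ∏ i ∈ univ.erase i', (∑ j ∈ (if i ∈ σ then A else Aᶜ), g i j)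
      = ∏ i ∈ univ.erase i', (if i ∈ σ then (∑ x ∈ A, w x) else (∑ x ∈ Aᶜ, w x)) := by
    refine Finset.prod_congr rfl fun i hi => ?_
    have hne := (Finset.mem_erase.mp hi).1
    by_cases h : i ∈ σ <;> simp [hg, h, hne]
  rw [h2]
  have h3 : (∑ j ∈ (if i' ∈ σ then A else Aᶜ), g i' j)
      = ∑ j ∈ (if i' ∈ σ then A else Aᶜ), (if j ∈ C then w j else 0) := by
    refine Finset.sum_congr rfl fun j _ => by simp [hg]
  rw [h3]
  by_cases hi' : i' ∈ σ
  · rw [if_pos hi', if_pos hi', Finset.sum_ite_mem]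
    have : A ∩ C = ∅ := by
      ext x
      simp only [Finset.mem_inter, Finset.notMem_empty, iff_false, not_and]
      intro hxA hxC
      exact absurd hxA (by simpa using hC hxC)
    simp [this]
  · rw [if_neg hi', if_neg hi', Finset.sum_ite_mem, Finset.inter_eq_right.mpr hC]
    rw [Finset.prod_ite, Finset.prod_const, Finset.prod_const]
    have e1 : (univ.erase i').filter (fun x => x ∈ σ) = σ := by
      ext x
      simp only [Finset.mem_filter, Finset.mem_erase, mem_univ, true_and, and_true]
      constructor
      · exact fun h => h.2
      · intro h
        refine ⟨fun he => hi' ?_, h⟩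
        rwa [← he]
    have e2 : (univ.erase i').filter (fun x => x ∉ σ) = σᶜ.erase i' := by
      ext x
      simp only [Finset.mem_filter, Finset.mem_erase, mem_univ, true_and, Finset.mem_compl]
      tauto
    rw [e1, e2, Finset.card_erase_of_mem (by simpa using hi'), Finset.card_compl,
      Fintype.card_fin]
    ring

lemma slice_sum_count {k : ℕ} (w : α → ℝ) (A C : Finset α) (hC : C ⊆ Aᶜ)
    (σ : Finset (Fin k)) :
    ∑ z ∈ univ.filter (fun z : Fin k → α => univ.filter (fun i => z i ∈ A) = σ),
        (∏ i, w (z i)) * ((univ.filter fun i => z i ∈ C).card : ℝ)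
      = ((k - σ.card : ℕ) : ℝ) * ((∑ x ∈ C, w x) *
          ((∑ x ∈ A, w x) ^ σ.card * (∑ x ∈ Aᶜ, w x) ^ (k - σ.card - 1))) := by
  classical
  have hcard : ∀ z : Fin k → α, ((univ.filter fun i => z i ∈ C).card : ℝ)
      = ∑ i' : Fin k, (if z i' ∈ C then (1:ℝ) else 0) := by
    intro z
    rw [Finset.card_filter]
    push_cast
    rfl
  have step1 : ∑ z ∈ univ.filter (fun z : Fin k → α => univ.filter (fun i => z i ∈ A) = σ),
        (∏ i, w (z i)) * ((univ.filter fun i => z i ∈ C).card : ℝ)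
      = ∑ z ∈ univ.filter (fun z : Fin k → α => univ.filter (fun i => z i ∈ A) = σ),
          ∑ i' : Fin k, (∏ i, w (z i)) * (if z i' ∈ C then (1:ℝ) else 0) := by
    refine Finset.sum_congr rfl fun z _ => ?_
    rw [hcard z, Finset.mul_sum]
  rw [step1, Finset.sum_comm]
  rw [Finset.sum_congr rfl (fun i' (_ : i' ∈ univ) => slice_sum_ind w A C hC σ i')]
  rw [Finset.sum_ite, Finset.sum_const, Finset.sum_const]
  have e2 : (univ.filter fun x : Fin k => x ∉ σ) = σᶜ := by ext; simp
  rw [e2, Finset.card_compl, Fintype.card_fin]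
  simp [nsmul_eq_mul]

lemma sum_split {k m : ℕ} (A : Finset α) (f : (Fin k → α) → ℝ) :
    ∑ z ∈ univ.filter (fun z : Fin k → α => (univ.filter fun i => z i ∈ A).card = m), f z
      = ∑ σ ∈ Finset.powersetCard m (univ : Finset (Fin k)),
          ∑ z ∈ univ.filter (fun z : Fin k → α => univ.filter (fun i => z i ∈ A) = σ), f z := by
  classical
  have h1 : ∀ σ ∈ Finset.powersetCard m (univ : Finset (Fin k)),
      univ.filter (fun z : Fin k → α => univ.filter (fun i => z i ∈ A) = σ)
        = (univ.filter (fun z : Fin k → α => (univ.filter fun i => z i ∈ A).card = m)).filter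
            (fun z => univ.filter (fun i => z i ∈ A) = σ) := by
    intro σ hσ
    have hσm : σ.card = m := Finset.mem_powersetCard_univ.mp hσ
    ext z
    simp only [Finset.mem_filter, mem_univ, true_and]
    constructor
    · intro h; exact ⟨by rw [h, hσm], h⟩
    · intro h; exact h.2
  rw [← Finset.sum_fiberwise_of_maps_to
    (fun z hz => Finset.mem_powersetCard_univ.mpr (Finset.mem_filter.mp hz).2) f]
  exact Finset.sum_congr rfl fun σ hσ => by rw [← h1 σ hσ]

lemma key {k m : ℕ} (hk : 0 < k) (hm : m ≤ k) (w : α → ℝ) (A B : Finset α)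
    (hAB : A ⊆ B) (htot : ∑ x, w x = 1) (hp : ∑ x ∈ A, w x < 1) :
    ∑ z ∈ univ.filter (fun z : Fin k → α => (univ.filter fun i => z i ∈ A).card = m),
        (∏ i, w (z i)) * (((univ.filter fun i => z i ∈ B).card : ℝ) / k - ∑ x ∈ B, w x)
      = ((1 - ∑ x ∈ B, w x) / (1 - ∑ x ∈ A, w x)) * ((m : ℝ) / k - ∑ x ∈ A, w x) *
          ∑ z ∈ univ.filter (fun z : Fin k → α => (univ.filter fun i => z i ∈ A).card = m),
            ∏ i, w (z i) := by
  classical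
  have hC : B \ A ⊆ Aᶜ := fun x hx => Finset.mem_compl.mpr (Finset.mem_sdiff.mp hx).2
  have hr : ∑ x ∈ Aᶜ, w x = 1 - ∑ x ∈ A, w x := by
    have := Finset.sum_add_sum_compl A w
    rw [htot] at this
    linarith
  have hcval : ∑ x ∈ B \ A, w x = (∑ x ∈ B, w x) - ∑ x ∈ A, w x :=
    Finset.sum_sdiff_eq_sub hAB
  set p := ∑ x ∈ A, w x with hpdef
  set q := ∑ x ∈ B, w x with hqdef
  have h1p : (1 : ℝ) - p ≠ 0 := by linarith
  rw [sum_split, sum_split, Finset.mul_sum]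
  refine Finset.sum_congr rfl fun σ hσ => ?_
  have hσm : σ.card = m := Finset.mem_powersetCard_univ.mp hσ
  have hBcount : ∀ z ∈ univ.filter (fun z : Fin k → α => univ.filter (fun i => z i ∈ A) = σ),
      ((univ.filter fun i => z i ∈ B).card : ℝ)
        = m + ((univ.filter fun i => z i ∈ B \ A).card : ℝ) := by
    intro z hz
    have hz' : univ.filter (fun i => z i ∈ A) = σ := (Finset.mem_filter.mp hz).2
    have hsplit : (univ.filter fun i => z i ∈ B) =
        (univ.filter fun i => z i ∈ A) ∪ (univ.filter fun i => z i ∈ B \ A) := by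
      rw [← Finset.filter_or]
      refine Finset.filter_congr fun i _ => ?_
      simp only [Finset.mem_sdiff]
      constructor
      · intro h
        by_cases hA : z i ∈ A
        exacts [Or.inl hA, Or.inr ⟨h, hA⟩]
      · rintro (h | h)
        exacts [hAB h, h.1]
    have hdisj : Disjoint (univ.filter fun i => z i ∈ A)
        (univ.filter fun i => z i ∈ B \ A) := by
      rw [Finset.disjoint_left]
      intro i hi1 hi2
      exact ((Finset.mem_sdiff.mp (Finset.mem_filter.mp hi2).2).2) (Finset.mem_filter.mp hi1).2
    rw [hsplit, Finset.card_union_of_disjoint hdisj, hz', hσm]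
    push_cast
    ring
  have expand : ∑ z ∈ univ.filter (fun z : Fin k → α => univ.filter (fun i => z i ∈ A) = σ),
        (∏ i, w (z i)) * (((univ.filter fun i => z i ∈ B).card : ℝ) / k - q)
      = ((m : ℝ) / k - q) *
          ∑ z ∈ univ.filter (fun z : Fin k → α => univ.filter (fun i => z i ∈ A) = σ),
            ∏ i, w (z i)
        + (1 / k) *
          ∑ z ∈ univ.filter (fun z : Fin k → α => univ.filter (fun i => z i ∈ A) = σ),
            (∏ i, w (z i)) * ((univ.filter fun i => z i ∈ B \ A).card : ℝ) := by
    rw [Finset.mul_sum, Finset.mul_sum, ← Finset.sum_add_distrib]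
    refine Finset.sum_congr rfl fun z hz => ?_
    rw [hBcount z hz]
    ring
  rw [expand, slice_sum w A σ, slice_sum_count w A (B \ A) hC σ, hσm, hcval, hr, ← hpdef]
  -- now pure algebra
  rcases Nat.lt_or_ge m k with hmk | hmk
  · have hkm : k - m = (k - m - 1) + 1 := by omega
    have hcast : ((k - m : ℕ) : ℝ) = (k : ℝ) - m := by
      push_cast [Nat.cast_sub hm]; ring
    have h2 : (1 - p) ^ (k - m) = (1 - p) ^ (k - m - 1) * (1 - p) := by
      rw [← pow_succ, ← hkm]
    rw [hcast, h2]
    have hk0 : (k : ℝ) ≠ 0 := Nat.cast_ne_zero.mpr hk.ne'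
    field_simp
    ring
  · have hmk' : m = k := le_antisymm hm hmk
    subst hmk'
    simp only [Nat.sub_self, pow_zero, mul_one, Nat.cast_zero, zero_mul, mul_zero, add_zero]
    have hk0 : (m : ℝ) ≠ 0 := Nat.cast_ne_zero.mpr hk.ne'
    field_simp


/-- The true cdf of `μ` at `t`. -/
noncomputable def trueCDF {n : ℕ} (μ : Measure (Fin (n + 1))) (t : ℕ) : ℝ :=
  (μ {j : Fin (n + 1) | (j : ℕ) ≤ t}).toReal

lemma meas_coe_finset {β : Type*} [Fintype β] [MeasurableSpace β] [MeasurableSingletonClass β]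
    (ν : Measure β) [IsFiniteMeasure ν] (s : Finset β) :
    (ν ↑s).toReal = ∑ x ∈ s, (ν {x}).toReal := by
  have h := sum_measure_preimage_singleton (μ := ν) s
    (f := (id : β → β)) (fun y _ => by simpa using measurableSet_singleton y)
  simp only [Set.preimage_id] at h
  rw [← h, ENNReal.toReal_sum (fun a _ => measure_ne_top ν _)]

/-- The martingale property of the normalized empirical-cdf deviations: conditioned on the
event that exactly `m` of the `k` samples are `≤ ℓ−1`, the expected deviation at `ℓ`
equals `((1 − F(ℓ))/(1 − F(ℓ−1))) · (m/k − F(ℓ−1))`. -/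
theorem stmt12 {n k : ℕ} (hk : 0 < k) (μ : Measure (Fin (n + 1)))
    [IsProbabilityMeasure μ] (ℓ : ℕ) (hℓ1 : 1 ≤ ℓ) (hℓn : ℓ ≤ n)
    (m : ℕ) (hm : m ≤ k) (hF : trueCDF μ (ℓ - 1) < 1) :
    ∫ z in {z : Fin k → Fin (n + 1) |
        (Finset.univ.filter (fun i => (z i : ℕ) ≤ ℓ - 1)).card = m},
        (empCDF z ℓ - trueCDF μ ℓ) ∂(Measure.pi fun _ : Fin k => μ) =
      ((1 - trueCDF μ ℓ) / (1 - trueCDF μ (ℓ - 1))) * ((m : ℝ) / k - trueCDF μ (ℓ - 1)) *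
        ((Measure.pi fun _ : Fin k => μ)
          {z : Fin k → Fin (n + 1) |
            (Finset.univ.filter (fun i => (z i : ℕ) ≤ ℓ - 1)).card = m}).toReal := by
  classical
  set π := Measure.pi fun _ : Fin k => μ with hπ
  set w : Fin (n + 1) → ℝ := fun x => (μ {x}).toReal with hw
  set A : Finset (Fin (n + 1)) := univ.filter (fun j => (j : ℕ) ≤ ℓ - 1) with hA
  set B : Finset (Fin (n + 1)) := univ.filter (fun j => (j : ℕ) ≤ ℓ) with hB
  have hfiltA : ∀ z : Fin k → Fin (n + 1),
      (univ.filter fun i => (z i : ℕ) ≤ ℓ - 1) = (univ.filter fun i => z i ∈ A) := by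
    intro z; ext i; simp [hA]
  have hSet : {z : Fin k → Fin (n + 1) |
      (Finset.univ.filter (fun i => (z i : ℕ) ≤ ℓ - 1)).card = m}
      = ↑(univ.filter (fun z : Fin k → Fin (n + 1) =>
          (univ.filter fun i => z i ∈ A).card = m)) := by
    ext z
    simp only [Set.mem_setOf_eq, Finset.coe_filter, Set.mem_setOf_eq, mem_univ, true_and,
      hfiltA z]
  have hsing : ∀ z : Fin k → Fin (n + 1), (π {z}).toReal = ∏ i, w (z i) := by
    intro z
    rw [hπ, ← Set.univ_pi_singleton z, Measure.pi_pi, ENNReal.toReal_prod]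
  have hfin : ∀ s : Finset (Fin k → Fin (n + 1)),
      (π ↑s).toReal = ∑ z ∈ s, ∏ i, w (z i) := by
    intro s
    rw [meas_coe_finset]
    exact Finset.sum_congr rfl fun z _ => hsing z
  have hcdf : ∀ t : ℕ, trueCDF μ t = ∑ x ∈ univ.filter (fun j : Fin (n + 1) => (j : ℕ) ≤ t), w x := by
    intro t
    have hset : {j : Fin (n + 1) | (j : ℕ) ≤ t}
        = ↑(univ.filter (fun j : Fin (n + 1) => (j : ℕ) ≤ t)) := by
      ext j; simp
    rw [trueCDF, hset, meas_coe_finset]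
  have htot : ∑ x, w x = 1 := by
    have : ((μ : Measure (Fin (n+1))) (↑(univ : Finset (Fin (n+1))))).toReal = ∑ x, w x :=
      meas_coe_finset μ univ
    rw [Finset.coe_univ] at this
    rw [← this, measure_univ, ENNReal.toReal_one]
  have hAB : A ⊆ B := by
    intro x hx
    simp only [hA, hB, Finset.mem_filter, mem_univ, true_and] at hx ⊢
    omega
  have hpA : ∑ x ∈ A, w x < 1 := by rw [hA, ← hcdf (ℓ - 1)]; exact hF
  -- rewrite the integral
  rw [hSet, integral_finset (hf := Integrable.of_finite.integrableOn)]
  simp only [Measure.real]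
  have hcdfA : trueCDF μ (ℓ - 1) = ∑ x ∈ A, w x := by rw [hA, ← hcdf (ℓ - 1)]
  have hcdfB : trueCDF μ ℓ = ∑ x ∈ B, w x := by rw [hB, ← hcdf ℓ]
  have hint : ∀ z ∈ univ.filter (fun z : Fin k → Fin (n + 1) =>
      (univ.filter fun i => z i ∈ A).card = m),
      (π {z}).toReal • (empCDF z ℓ - trueCDF μ ℓ)
        = (∏ i, w (z i)) * (((univ.filter fun i => z i ∈ B).card : ℝ) / k - ∑ x ∈ B, w x) := by
    intro z _
    have hfiltB : (univ.filter fun i => (z i : ℕ) ≤ ℓ) = (univ.filter fun i => z i ∈ B) := by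
      ext i; simp [hB]
    rw [hsing z, smul_eq_mul, hcdfB, empCDF, hfiltB]
  rw [Finset.sum_congr rfl hint, hfin, hcdfA, hcdfB]
  exact key hk hm w A B hAB htot hpA
end
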